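/- arXiv:1404.3614 — 5 statements merged into one kernel-verified Lean document; each statement's English description precedes it below -/
import Mathlib

section
/- If C, D are symmetric positive definite d×d matrices with C ⪯ D, then 0 ≤ tr(D − C) ≤ tr[D(C⁻¹ − D⁻¹)C] ≤ (tr D)·tr(C⁻¹ − D⁻¹)·(tr C) ≤ (tr D)²·tr(C⁻¹ − D⁻¹). -/
open Matrix

private lemma trace_tm_eq {n : ℕ} (X Y : Matrix (Fin n) (Fin n) ℝ) :
    (Xᵀ * Y).trace = ∑ p : Fin n × Fin n, X p.1 p.2 * Y p.1 p.2 := by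
  rw [Fintype.sum_prod_type, Matrix.trace]
  simp only [Matrix.diag, Matrix.mul_apply, Matrix.transpose_apply]
  exact Finset.sum_comm

private lemma trace_tm_nonneg {n : ℕ} (X : Matrix (Fin n) (Fin n) ℝ) :
    0 ≤ (Xᵀ * X).trace := by
  rw [trace_tm_eq]
  exact Finset.sum_nonneg fun p _ => mul_self_nonneg _

private lemma trace_cs {n : ℕ} (X Y : Matrix (Fin n) (Fin n) ℝ) :
    (Xᵀ * Y).trace ^ 2 ≤ (Xᵀ * X).trace * (Yᵀ * Y).trace := by
  rw [trace_tm_eq, trace_tm_eq, trace_tm_eq]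
  simpa only [← sq] using Finset.sum_mul_sq_le_sq_mul_sq Finset.univ
    (fun p : Fin n × Fin n => X p.1 p.2) (fun p => Y p.1 p.2)

private lemma trace_submul {n : ℕ} (X Y : Matrix (Fin n) (Fin n) ℝ) :
    ((X * Y)ᵀ * (X * Y)).trace ≤ (Xᵀ * X).trace * (Yᵀ * Y).trace := by
  rw [trace_tm_eq, trace_tm_eq, trace_tm_eq]
  have h1 : ∀ p : Fin n × Fin n, (X * Y) p.1 p.2 * (X * Y) p.1 p.2 ≤
      (∑ k, X p.1 k ^ 2) * (∑ k, Y k p.2 ^ 2) := by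
    intro p
    have := Finset.sum_mul_sq_le_sq_mul_sq Finset.univ (fun k => X p.1 k) (fun k => Y k p.2)
    simpa [← sq, Matrix.mul_apply] using this
  have h2 : (∑ p : Fin n × Fin n, X p.1 p.2 * X p.1 p.2) = ∑ i, ∑ k, X i k ^ 2 := by
    rw [Fintype.sum_prod_type]; simp [sq]
  have h3 : (∑ p : Fin n × Fin n, Y p.1 p.2 * Y p.1 p.2) = ∑ j, ∑ k, Y k j ^ 2 := by
    rw [Fintype.sum_prod_type]
    rw [Finset.sum_comm]
    simp [sq]
  calc ∑ p : Fin n × Fin n, (X * Y) p.1 p.2 * (X * Y) p.1 p.2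
      ≤ ∑ p : Fin n × Fin n, (∑ k, X p.1 k ^ 2) * (∑ k, Y k p.2 ^ 2) :=
        Finset.sum_le_sum fun p _ => h1 p
    _ = (∑ i, ∑ k, X i k ^ 2) * (∑ j, ∑ k, Y k j ^ 2) := by
        rw [Fintype.sum_prod_type, Finset.sum_mul_sum]
    _ = _ := by rw [h2, h3]

open scoped MatrixOrder in
noncomputable def Matrix.PosSemidef.sqrt {n : ℕ} {M : Matrix (Fin n) (Fin n) ℝ}
    (_hM : M.PosSemidef) : Matrix (Fin n) (Fin n) ℝ := CFC.sqrt M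

open scoped MatrixOrder in
lemma Matrix.PosSemidef.posSemidef_sqrt {n : ℕ} {M : Matrix (Fin n) (Fin n) ℝ}
    (hM : M.PosSemidef) : hM.sqrt.PosSemidef := (CFC.sqrt_nonneg M).posSemidef

open scoped MatrixOrder in
lemma Matrix.PosSemidef.sqrt_mul_self {n : ℕ} {M : Matrix (Fin n) (Fin n) ℝ}
    (hM : M.PosSemidef) : hM.sqrt * hM.sqrt = M := CFC.sqrt_mul_sqrt_self M hM.nonneg

private lemma psd_eq_ctm {n : ℕ} {A : Matrix (Fin n) (Fin n) ℝ} (hA : A.PosSemidef) :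
    ∃ X : Matrix (Fin n) (Fin n) ℝ, A = Xᴴ * X :=
  ⟨hA.sqrt, by rw [hA.posSemidef_sqrt.isHermitian.eq, hA.sqrt_mul_self]⟩

private lemma trace_mul_le_psd {n : ℕ} {A B : Matrix (Fin n) (Fin n) ℝ}
    (hA : A.PosSemidef) (hB : B.PosSemidef) : (A * B).trace ≤ A.trace * B.trace := by
  obtain ⟨X, hX⟩ := psd_eq_ctm hA
  obtain ⟨Y, hY⟩ := psd_eq_ctm hB
  rw [Matrix.conjTranspose_eq_transpose_of_trivial] at hX hY
  subst hX; subst hY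
  have key := trace_submul Y Xᵀ
  have e1 : (Y * Xᵀ)ᵀ * (Y * Xᵀ) = X * (Yᵀ * Y) * Xᵀ := by
    rw [Matrix.transpose_mul, Matrix.transpose_transpose]; noncomm_ring
  have e2 : (X * (Yᵀ * Y) * Xᵀ).trace = (Xᵀ * X * (Yᵀ * Y)).trace := by
    rw [Matrix.trace_mul_cycle, Matrix.mul_assoc]
  have e3 : (Xᵀᵀ * Xᵀ).trace = (Xᵀ * X).trace := by
    rw [Matrix.transpose_transpose, Matrix.trace_mul_comm]
  rw [e1, e2, e3] at key
  linarith [key]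

private lemma psd_trace_nonneg {n : ℕ} {A : Matrix (Fin n) (Fin n) ℝ}
    (hA : A.PosSemidef) : 0 ≤ A.trace := by
  rw [Matrix.trace]
  refine Finset.sum_nonneg fun i _ => ?_
  have := hA.dotProduct_mulVec_nonneg (Pi.single i 1)
  simpa [dotProduct, Matrix.mulVec, Pi.single_apply] using this

/-- If `C, D` are symmetric positive definite `d×d` matrices with `C ⪯ D` (Löwner order), then
`0 ≤ tr(D − C) ≤ tr[D(C⁻¹ − D⁻¹)C] ≤ (tr D)·tr(C⁻¹ − D⁻¹)·(tr C) ≤ (tr D)²·tr(C⁻¹ − D⁻¹)`. -/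
theorem stmt_1 {d : ℕ} (C D : Matrix (Fin d) (Fin d) ℝ)
    (hC : C.PosDef) (hD : D.PosDef)
    (hCD : ∀ u : Fin d → ℝ, C.mulVec u ⬝ᵥ u ≤ D.mulVec u ⬝ᵥ u) :
    0 ≤ (D - C).trace ∧
    (D - C).trace ≤ (D * (C⁻¹ - D⁻¹) * C).trace ∧
    (D * (C⁻¹ - D⁻¹) * C).trace ≤ D.trace * (C⁻¹ - D⁻¹).trace * C.trace ∧
    D.trace * (C⁻¹ - D⁻¹).trace * C.trace ≤ D.trace ^ 2 * (C⁻¹ - D⁻¹).trace := by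
  classical
  have hCdet : IsUnit C.det := hC.det_pos.ne'.isUnit
  have hDdet : IsUnit D.det := hD.det_pos.ne'.isUnit
  have hCt : Cᵀ = C := by
    rw [← Matrix.conjTranspose_eq_transpose_of_trivial]; exact hC.isHermitian
  have hswap : ∀ (A : Matrix (Fin d) (Fin d) ℝ) (u w : Fin d → ℝ),
      u ⬝ᵥ (A *ᵥ w) = w ⬝ᵥ (Aᵀ *ᵥ u) := by
    intro A u w
    rw [Matrix.dotProduct_mulVec, dotProduct_comm, Matrix.mulVec_transpose]
  -- positive semidefiniteness of C⁻¹ - D⁻¹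
  have hM : (C⁻¹ - D⁻¹).PosSemidef := by
    refine Matrix.PosSemidef.of_dotProduct_mulVec_nonneg ?_ ?_
    · exact (hC.inv.isHermitian).sub (hD.inv.isHermitian)
    · intro x
      have hCa : C *ᵥ (C⁻¹ *ᵥ x) = x := by
        rw [Matrix.mulVec_mulVec, Matrix.mul_nonsing_inv _ hCdet, Matrix.one_mulVec]
      have hDv : D *ᵥ (D⁻¹ *ᵥ x) = x := by
        rw [Matrix.mulVec_mulVec, Matrix.mul_nonsing_inv _ hDdet, Matrix.one_mulVec]
      set a := C⁻¹ *ᵥ x with ha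
      set v := D⁻¹ *ᵥ x with hv
      have h0 : 0 ≤ (a - v) ⬝ᵥ (C *ᵥ (a - v)) := by
        simpa using hC.posSemidef.dotProduct_mulVec_nonneg (a - v)
      have t2 : a ⬝ᵥ (C *ᵥ v) = x ⬝ᵥ v := by
        rw [hswap, hCt, hCa, dotProduct_comm]
      have t3 : v ⬝ᵥ (C *ᵥ a) = x ⬝ᵥ v := by
        rw [hCa, dotProduct_comm]
      have t4 : v ⬝ᵥ (C *ᵥ v) ≤ x ⬝ᵥ v := by
        have h := hCD v
        rw [hDv] at h
        calc v ⬝ᵥ (C *ᵥ v) = (C *ᵥ v) ⬝ᵥ v := dotProduct_comm _ _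
          _ ≤ x ⬝ᵥ v := h
      have expand : (a - v) ⬝ᵥ (C *ᵥ (a - v)) =
          x ⬝ᵥ a - a ⬝ᵥ (C *ᵥ v) - v ⬝ᵥ (C *ᵥ a) + v ⬝ᵥ (C *ᵥ v) := by
        rw [Matrix.mulVec_sub, sub_dotProduct, dotProduct_sub,
          dotProduct_sub, hCa, dotProduct_comm a x]
        ring
      have goal_eq : star x ⬝ᵥ ((C⁻¹ - D⁻¹) *ᵥ x) = x ⬝ᵥ a - x ⬝ᵥ v := by
        rw [Matrix.sub_mulVec, dotProduct_sub, ha, hv]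
        simp
      rw [goal_eq]
      rw [expand, t2, t3] at h0
      linarith
  set M := C⁻¹ - D⁻¹ with hMdef
  have idDMC : D * M * C = D - C := by
    rw [hMdef, Matrix.mul_sub, Matrix.sub_mul, Matrix.mul_assoc,
      Matrix.nonsing_inv_mul _ hCdet, Matrix.mul_one,
      Matrix.mul_nonsing_inv _ hDdet, Matrix.one_mul]
  have idCMD : C * M * D = D - C := by
    rw [hMdef, Matrix.mul_sub, Matrix.mul_nonsing_inv _ hCdet, Matrix.sub_mul,
      Matrix.one_mul, Matrix.mul_assoc, Matrix.nonsing_inv_mul _ hDdet, Matrix.mul_one]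
  -- part 1
  have hdiag : ∀ (A : Matrix (Fin d) (Fin d) ℝ) (i : Fin d),
      A *ᵥ Pi.single i 1 ⬝ᵥ Pi.single i 1 = A i i := by
    intro A i
    simp [dotProduct, Matrix.mulVec, Pi.single_apply]
  have h1 : 0 ≤ (D - C).trace := by
    rw [Matrix.trace]
    refine Finset.sum_nonneg fun i _ => ?_
    have := hCD (Pi.single i 1)
    rw [hdiag, hdiag] at this
    simpa [Matrix.sub_apply] using sub_nonneg.mpr this
  -- part 2 (equality)
  have h2 : (D - C).trace ≤ (D * M * C).trace := le_of_eq (by rw [idDMC])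
  -- part 3
  have hSt : hM.sqrtᵀ = hM.sqrt := by
    rw [← Matrix.conjTranspose_eq_transpose_of_trivial]
    exact hM.posSemidef_sqrt.isHermitian
  have hSmul : hM.sqrt * hM.sqrt = M := hM.sqrt_mul_self
  have hDt : Dᵀ = D := by
    rw [← Matrix.conjTranspose_eq_transpose_of_trivial]; exact hD.isHermitian
  have eSCSD : (hM.sqrt * C)ᵀ * (hM.sqrt * D) = C * M * D := by
    rw [Matrix.transpose_mul, hSt, hCt]
    have : C * hM.sqrt * (hM.sqrt * D) = C * (hM.sqrt * hM.sqrt) * D := by noncomm_ring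
    rw [this, hSmul]
  have eSCSC : (hM.sqrt * C)ᵀ * (hM.sqrt * C) = C * M * C := by
    rw [Matrix.transpose_mul, hSt, hCt]
    have : C * hM.sqrt * (hM.sqrt * C) = C * (hM.sqrt * hM.sqrt) * C := by noncomm_ring
    rw [this, hSmul]
  have eSDSD : (hM.sqrt * D)ᵀ * (hM.sqrt * D) = D * M * D := by
    rw [Matrix.transpose_mul, hSt, hDt]
    have : D * hM.sqrt * (hM.sqrt * D) = D * (hM.sqrt * hM.sqrt) * D := by noncomm_ring
    rw [this, hSmul]
  have hCC : (C * C).PosSemidef := by simpa [pow_two] using hC.posSemidef.pow 2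
  have hDD : (D * D).PosSemidef := by simpa [pow_two] using hD.posSemidef.pow 2
  have trM0 : 0 ≤ M.trace := psd_trace_nonneg hM
  have trC0 : 0 ≤ C.trace := psd_trace_nonneg hC.posSemidef
  have trD0 : 0 ≤ D.trace := psd_trace_nonneg hD.posSemidef
  have bC : (C * M * C).trace ≤ M.trace * (C.trace * C.trace) := by
    have e : (C * M * C).trace = (M * (C * C)).trace := by
      rw [Matrix.trace_mul_cycle, Matrix.trace_mul_comm]
    rw [e]
    calc (M * (C * C)).trace ≤ M.trace * (C * C).trace := trace_mul_le_psd hM hCC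
      _ ≤ M.trace * (C.trace * C.trace) :=
        mul_le_mul_of_nonneg_left (trace_mul_le_psd hC.posSemidef hC.posSemidef) trM0
  have bD : (D * M * D).trace ≤ M.trace * (D.trace * D.trace) := by
    have e : (D * M * D).trace = (M * (D * D)).trace := by
      rw [Matrix.trace_mul_cycle, Matrix.trace_mul_comm]
    rw [e]
    calc (M * (D * D)).trace ≤ M.trace * (D * D).trace := trace_mul_le_psd hM hDD
      _ ≤ M.trace * (D.trace * D.trace) :=
        mul_le_mul_of_nonneg_left (trace_mul_le_psd hD.posSemidef hD.posSemidef) trM0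
  have cs := trace_cs (hM.sqrt * C) (hM.sqrt * D)
  rw [eSCSD, eSCSC, eSDSD] at cs
  have posC : 0 ≤ (C * M * C).trace := by rw [← eSCSC]; exact trace_tm_nonneg _
  have posD : 0 ≤ (D * M * D).trace := by rw [← eSDSD]; exact trace_tm_nonneg _
  have hsq : (C * M * D).trace ^ 2 ≤ (M.trace * C.trace * D.trace) ^ 2 := by
    calc (C * M * D).trace ^ 2 ≤ (C * M * C).trace * (D * M * D).trace := cs
      _ ≤ (M.trace * (C.trace * C.trace)) * (M.trace * (D.trace * D.trace)) := by
          exact mul_le_mul bC bD posD (by positivity)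
      _ = (M.trace * C.trace * D.trace) ^ 2 := by ring
  have ht0 : 0 ≤ (C * M * D).trace := by rw [idCMD]; exact h1
  have hE0 : 0 ≤ M.trace * C.trace * D.trace := by positivity
  have h3 : (D * M * C).trace ≤ D.trace * M.trace * C.trace := by
    have key : (C * M * D).trace ≤ M.trace * C.trace * D.trace := by
      nlinarith [hsq, ht0, hE0]
    calc (D * M * C).trace = (C * M * D).trace := by rw [idDMC, idCMD]
      _ ≤ M.trace * C.trace * D.trace := key
      _ = D.trace * M.trace * C.trace := by ring
  -- part 4
  have hCleD : C.trace ≤ D.trace := by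
    have := h1
    rw [Matrix.trace_sub] at this
    linarith
  have h4 : D.trace * M.trace * C.trace ≤ D.trace ^ 2 * M.trace := by
    nlinarith [mul_nonneg (mul_nonneg trD0 trM0) (sub_nonneg.mpr hCleD)]
  exact ⟨h1, h2, h3, h4⟩
end

section
/- Let H be a real Hilbert space with an orthogonal decomposition H = U ⊕ E ⊕ J where U is isometrically isomorphic to R^d, and let A: H → H be a symmetric, bounded, coercive linear operator. Define matrices A_H, B_H ∈ R^{d×d} by ⟨A_H E, E⟩ = min_{e∈E} ⟨A(E+e), E+e⟩_H and ⟨B_H J, J⟩ = min_{j∈J} ⟨A⁻¹(J+j), J+j⟩_H for all E, J ∈ R^d (identifying R^d with U). Then A_H = B_H⁻¹. -/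
open scoped RealInnerProductSpace

private lemma aux_quadratic (a b : ℝ) (ha : 0 ≤ a) (h : ∀ t : ℝ, 0 ≤ a * t ^ 2 + 2 * b * t) :
    b = 0 := by
  rcases eq_or_lt_of_le ha with ha0 | hapos
  · have h1 := h 1
    have h2 := h (-1)
    nlinarith
  · have h1 := h (-(b / a))
    have : a * (-(b / a)) ^ 2 + 2 * b * (-(b / a)) = -(b ^ 2 / a) := by
      field_simp; ring
    rw [this] at h1
    have hdiv : b ^ 2 / a ≤ 0 := by linarith
    have hb2 : b ^ 2 ≤ 0 := by
      have := (div_le_iff₀ hapos).mp hdiv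
      simpa using this
    have hb0 : b ^ 2 = 0 := le_antisymm hb2 (sq_nonneg b)
    exact (pow_eq_zero_iff two_ne_zero).mp hb0

section helpers

variable {d : ℕ} {H : Type*} [NormedAddCommGroup H] [InnerProductSpace ℝ H]
  (sU : Submodule ℝ H) (ι : EuclideanSpace ℝ (Fin d) ≃ₗᵢ[ℝ] sU)
  (T : H →L[ℝ] H) (s : Submodule ℝ H) (M : Matrix (Fin d) (Fin d) ℝ)

private lemma expandT (hTsym : ∀ u v : H, ⟪T u, v⟫ = ⟪u, T v⟫) (x y : H) :
    ⟪T (x + y), x + y⟫ = ⟪T x, x⟫ + 2 * ⟪T x, y⟫ + ⟪T y, y⟫ := by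
  have h : ⟪T y, x⟫ = ⟪T x, y⟫ := by
    rw [hTsym y x, real_inner_comm]
  simp only [map_add, inner_add_left, inner_add_right]
  linarith

private lemma existsOrth (hTsym : ∀ u v : H, ⟪T u, v⟫ = ⟪u, T v⟫)
    (hTnn : ∀ x : H, 0 ≤ ⟪T x, x⟫)
    (hM : ∀ E0 : EuclideanSpace ℝ (Fin d),
      IsLeast {r : ℝ | ∃ e ∈ s, r = ⟪T ((ι E0 : H) + e), (ι E0 : H) + e⟫}
        ⟪Matrix.toEuclideanLin M E0, E0⟫)
    (E0 : EuclideanSpace ℝ (Fin d)) :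
    ∃ e ∈ s, ∀ e' ∈ s, ⟪T ((ι E0 : H) + e), e'⟫ = 0 := by
  obtain ⟨⟨e, he, hval⟩, hlb⟩ := hM E0
  refine ⟨e, he, fun e' he' => ?_⟩
  apply aux_quadratic _ _ (hTnn e')
  intro t
  have hmem : ⟪T ((ι E0 : H) + (e + t • e')), (ι E0 : H) + (e + t • e')⟫ ∈
      {r : ℝ | ∃ e ∈ s, r = ⟪T ((ι E0 : H) + e), (ι E0 : H) + e⟫} :=
    ⟨e + t • e', s.add_mem he (s.smul_mem t he'), rfl⟩
  have hle := hlb hmem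
  rw [hval] at hle
  have hassoc : (ι E0 : H) + (e + t • e') = ((ι E0 : H) + e) + t • e' := by abel
  have h1 : ⟪T (((ι E0 : H)) + e), t • e'⟫ = t * ⟪T ((ι E0 : H) + e), e'⟫ :=
    real_inner_smul_right _ _ _
  have h2 : ⟪T (t • e'), t • e'⟫ = t ^ 2 * ⟪T e', e'⟫ := by
    rw [map_smul, real_inner_smul_right, real_inner_smul_left]; ring
  have hexp : ⟪T (((ι E0 : H) + e) + t • e'), ((ι E0 : H) + e) + t • e'⟫ =
      ⟪T ((ι E0 : H) + e), (ι E0 : H) + e⟫ + 2 * (t * ⟪T ((ι E0 : H) + e), e'⟫) +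
        t ^ 2 * ⟪T e', e'⟫ := by
    rw [expandT T hTsym ((ι E0 : H) + e) (t • e'), h1, h2]
  rw [hassoc, hexp] at hle
  linarith

private lemma valOfOrth (hTsym : ∀ u v : H, ⟪T u, v⟫ = ⟪u, T v⟫)
    (hTnn : ∀ x : H, 0 ≤ ⟪T x, x⟫)
    (hM : ∀ E0 : EuclideanSpace ℝ (Fin d),
      IsLeast {r : ℝ | ∃ e ∈ s, r = ⟪T ((ι E0 : H) + e), (ι E0 : H) + e⟫}
        ⟪Matrix.toEuclideanLin M E0, E0⟫)
    {E0 : EuclideanSpace ℝ (Fin d)} {e : H} (he : e ∈ s)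
    (horth : ∀ e' ∈ s, ⟪T ((ι E0 : H) + e), e'⟫ = 0) :
    ⟪Matrix.toEuclideanLin M E0, E0⟫ = ⟪T ((ι E0 : H) + e), (ι E0 : H) + e⟫ := by
  obtain ⟨⟨e0, he0, hval⟩, hlb⟩ := hM E0
  have h1 : ⟪Matrix.toEuclideanLin M E0, E0⟫ ≤ ⟪T ((ι E0 : H) + e), (ι E0 : H) + e⟫ :=
    hlb ⟨e, he, rfl⟩
  have hd : (ι E0 : H) + e0 = ((ι E0 : H) + e) + (e0 - e) := by abel
  have h2 : ⟪T ((ι E0 : H) + e0), (ι E0 : H) + e0⟫ =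
      ⟪T ((ι E0 : H) + e), (ι E0 : H) + e⟫ + 2 * ⟪T ((ι E0 : H) + e), e0 - e⟫ +
        ⟪T (e0 - e), e0 - e⟫ := by
    rw [hd, expandT T hTsym]
  have h3 : ⟪T ((ι E0 : H) + e), e0 - e⟫ = 0 := horth _ (s.sub_mem he0 he)
  have h4 := hTnn (e0 - e)
  rw [hval]
  linarith

private lemma polarOfOrth (hTsym : ∀ u v : H, ⟪T u, v⟫ = ⟪u, T v⟫)
    (hTnn : ∀ x : H, 0 ≤ ⟪T x, x⟫)
    (hM : ∀ E0 : EuclideanSpace ℝ (Fin d),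
      IsLeast {r : ℝ | ∃ e ∈ s, r = ⟪T ((ι E0 : H) + e), (ι E0 : H) + e⟫}
        ⟪Matrix.toEuclideanLin M E0, E0⟫)
    (hMs : M.IsSymm)
    {E0 : EuclideanSpace ℝ (Fin d)} {e : H} (he : e ∈ s)
    (horth : ∀ e' ∈ s, ⟪T ((ι E0 : H) + e), e'⟫ = 0)
    (E0' : EuclideanSpace ℝ (Fin d)) :
    ⟪Matrix.toEuclideanLin M E0, E0'⟫ = ⟪T ((ι E0 : H) + e), (ι E0' : H)⟫ := by
  obtain ⟨e', he', horth'⟩ := existsOrth sU ι T s M hTsym hTnn hM E0'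
  have hdec : (ι (E0 + E0') : H) + (e + e') = ((ι E0 : H) + e) + ((ι E0' : H) + e') := by
    simp only [map_add, Submodule.coe_add]; abel
  have horth2 : ∀ e'' ∈ s, ⟪T ((ι (E0 + E0') : H) + (e + e')), e''⟫ = 0 := by
    intro e'' he''
    rw [hdec, map_add, inner_add_left, horth e'' he'', horth' e'' he'', add_zero]
  have v1 := valOfOrth sU ι T s M hTsym hTnn hM he horth
  have v2 := valOfOrth sU ι T s M hTsym hTnn hM he' horth'
  have v3 := valOfOrth sU ι T s M hTsym hTnn hM (s.add_mem he he') horth2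
  rw [hdec, expandT T hTsym] at v3
  have hMherm : (Matrix.toEuclideanLin M).IsSymmetric := by
    apply Matrix.isHermitian_iff_isSymmetric.mp
    simpa [Matrix.IsHermitian] using hMs.eq
  have hmsym : ⟪Matrix.toEuclideanLin M E0', E0⟫ = ⟪Matrix.toEuclideanLin M E0, E0'⟫ := by
    rw [hMherm E0' E0, real_inner_comm]
  have hmexp : ⟪Matrix.toEuclideanLin M (E0 + E0'), E0 + E0'⟫ =
      ⟪Matrix.toEuclideanLin M E0, E0⟫ + 2 * ⟪Matrix.toEuclideanLin M E0, E0'⟫ +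
        ⟪Matrix.toEuclideanLin M E0', E0'⟫ := by
    simp only [map_add, inner_add_left, inner_add_right]
    linarith
  have hcross : ⟪T ((ι E0 : H) + e), (ι E0' : H) + e'⟫ =
      ⟪T ((ι E0 : H) + e), (ι E0' : H)⟫ := by
    rw [inner_add_right, horth e' he', add_zero]
  rw [hmexp] at v3
  linarith

end helpers

/-- Abstract duality: let `H` be a real Hilbert space with an orthogonal decomposition
`H = U ⊕ E ⊕ J`, `U` isometrically isomorphic to `ℝ^d`, and `A : H → H` symmetric, bounded
and coercive, with inverse `Ainv`. If the matrices `A_H, B_H ∈ ℝ^{d×d}` are symmetric and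
satisfy `⟨A_H E, E⟩ = min_{e ∈ E} ⟨A(E+e), E+e⟩` and `⟨B_H J, J⟩ = min_{j ∈ J} ⟨A⁻¹(J+j), J+j⟩`
(identifying `ℝ^d` with `U`), then `A_H = B_H⁻¹`. -/
theorem stmt_9 {d : ℕ} {H : Type*} [NormedAddCommGroup H] [InnerProductSpace ℝ H]
    [CompleteSpace H]
    (sU sE sJ : Submodule ℝ H)
    (hUE : ∀ u ∈ sU, ∀ e ∈ sE, ⟪u, e⟫ = 0)
    (hUJ : ∀ u ∈ sU, ∀ j ∈ sJ, ⟪u, j⟫ = 0)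
    (hEJ : ∀ e ∈ sE, ∀ j ∈ sJ, ⟪e, j⟫ = 0)
    (hspan : ∀ x : H, ∃ u ∈ sU, ∃ e ∈ sE, ∃ j ∈ sJ, x = u + e + j)
    (ι : EuclideanSpace ℝ (Fin d) ≃ₗᵢ[ℝ] sU)
    (A Ainv : H →L[ℝ] H)
    (hsym : ∀ u v : H, ⟪A u, v⟫ = ⟪u, A v⟫)
    (c C : ℝ) (hc : 0 < c) (hcC : c ≤ C)
    (hcoer : ∀ u : H, c * ‖u‖ ^ 2 ≤ ⟪A u, u⟫)
    (hbd : ∀ u : H, ⟪A u, u⟫ ≤ C * ‖u‖ ^ 2)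
    (hAinv1 : ∀ u : H, A (Ainv u) = u) (hAinv2 : ∀ u : H, Ainv (A u) = u)
    (AH BH : Matrix (Fin d) (Fin d) ℝ) (hAHs : AH.IsSymm) (hBHs : BH.IsSymm)
    (hAH : ∀ E0 : EuclideanSpace ℝ (Fin d),
      IsLeast {r : ℝ | ∃ e ∈ sE, r = ⟪A ((ι E0 : H) + e), (ι E0 : H) + e⟫}
        ⟪Matrix.toEuclideanLin AH E0, E0⟫)
    (hBH : ∀ J0 : EuclideanSpace ℝ (Fin d),
      IsLeast {r : ℝ | ∃ j ∈ sJ, r = ⟪Ainv ((ι J0 : H) + j), (ι J0 : H) + j⟫}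
        ⟪Matrix.toEuclideanLin BH J0, J0⟫) :
    AH = BH⁻¹ := by
  have hAnn : ∀ x : H, 0 ≤ ⟪A x, x⟫ := fun x =>
    le_trans (by positivity) (hcoer x)
  have hAinvsym : ∀ u v : H, ⟪Ainv u, v⟫ = ⟪u, Ainv v⟫ := by
    intro u v
    calc ⟪Ainv u, v⟫ = ⟪Ainv u, A (Ainv v)⟫ := by rw [hAinv1]
      _ = ⟪A (Ainv u), Ainv v⟫ := (hsym _ _).symm
      _ = ⟪u, Ainv v⟫ := by rw [hAinv1]
  have hAinvnn : ∀ x : H, 0 ≤ ⟪Ainv x, x⟫ := by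
    intro x
    calc (0:ℝ) ≤ ⟪A (Ainv x), Ainv x⟫ := hAnn _
      _ = ⟪Ainv x, A (Ainv x)⟫ := real_inner_comm _ _
      _ = ⟪Ainv x, x⟫ := by rw [hAinv1]
  have key : ∀ E0 : EuclideanSpace ℝ (Fin d),
      Matrix.toEuclideanLin BH (Matrix.toEuclideanLin AH E0) = E0 := by
    intro E0
    obtain ⟨e, he, horth⟩ := existsOrth sU ι A sE AH hsym hAnn hAH E0
    set x : H := (ι E0 : H) + e with hxdef
    obtain ⟨uy, huy, ey, hey, jy, hjy, hdec⟩ := hspan (A x)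
    have hey0 : ey = 0 := by
      have h1 : ⟪A x, ey⟫ = 0 := horth ey hey
      have h2 : ⟪A x, ey⟫ = ‖ey‖ ^ 2 := by
        have hje : ⟪jy, ey⟫ = (0:ℝ) := by
          rw [real_inner_comm]; exact hEJ ey hey jy hjy
        have hue : ⟪uy, ey⟫ = (0:ℝ) := hUE uy huy ey hey
        have hee : ⟪ey, ey⟫ = ‖ey‖ ^ 2 := real_inner_self_eq_norm_sq ey
        rw [hdec, inner_add_left, inner_add_left, hue, hje, hee]
        ring
      have : ‖ey‖ ^ 2 = 0 := by rw [← h2, h1]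
      have h3 : ‖ey‖ = 0 := by
        have := (pow_eq_zero_iff two_ne_zero).mp this
        exact this
      exact norm_eq_zero.mp h3
    have hAx : A x = uy + jy := by rw [hdec, hey0, add_zero]
    set J0 : EuclideanSpace ℝ (Fin d) := ι.symm ⟨uy, huy⟩ with hJ0def
    have hιJ0 : (ι J0 : H) = uy := by
      rw [hJ0def, LinearIsometryEquiv.apply_symm_apply]
    have hAH0 : Matrix.toEuclideanLin AH E0 = J0 := by
      apply ext_inner_right ℝ
      intro v
      rw [polarOfOrth sU ι A sE AH hsym hAnn hAH hAHs he horth v]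
      rw [hAx, inner_add_left]
      have hj : ⟪jy, (ι v : H)⟫ = 0 := by
        rw [real_inner_comm]
        exact hUJ _ (ι v).2 jy hjy
      have hu : ⟪uy, (ι v : H)⟫ = ⟪J0, v⟫ := by
        rw [← hιJ0]
        rw [← Submodule.coe_inner, ι.inner_map_map]
      rw [hj, hu, add_zero]
    have horthB : ∀ j' ∈ sJ, ⟪Ainv ((ι J0 : H) + jy), j'⟫ = 0 := by
      intro j' hj'
      rw [hιJ0, ← hAx, hAinv2]
      rw [hxdef, inner_add_left, hUJ _ (ι E0).2 j' hj', hEJ e he j' hj', add_zero]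
    have hBH0 : Matrix.toEuclideanLin BH J0 = E0 := by
      apply ext_inner_right ℝ
      intro v
      rw [polarOfOrth sU ι Ainv sJ BH hAinvsym hAinvnn hBH hBHs hjy horthB v]
      rw [hιJ0, ← hAx, hAinv2]
      rw [hxdef, inner_add_left]
      have he' : ⟪e, (ι v : H)⟫ = 0 := by
        rw [real_inner_comm]
        exact hUE _ (ι v).2 e he
      have hu : ⟪(ι E0 : H), (ι v : H)⟫ = ⟪E0, v⟫ := by
        rw [← Submodule.coe_inner, ι.inner_map_map]
      rw [he', hu, add_zero]
    rw [hAH0, hBH0]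
  have hmul : BH * AH = 1 := by
    apply Matrix.toEuclideanLin.injective
    ext x : 1
    have h1 : Matrix.toEuclideanLin (BH * AH) x =
        Matrix.toEuclideanLin BH (Matrix.toEuclideanLin AH x) := by
      simp [Matrix.toEuclideanLin_apply, Matrix.mulVec_mulVec]
    rw [h1, key x]
    simp [Matrix.toEuclideanLin_apply]
  exact (Matrix.inv_eq_right_inv hmul).symm
end

section
/- Under the hypotheses of the abstract duality theorem (H = U ⊕ E ⊕ J, A symmetric coercive bounded, A_H and B_H the primal and dual homogenized matrices), the minimizers e^(E) ∈ E and j^(J) ∈ J of the primal and dual problems are connected by J + j^(J) = A[E + e^(E)] whenever J = A_H E, for any E ∈ R^d. -/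
open scoped RealInnerProductSpace

private lemma aux_quad {b c : ℝ} (hc : 0 ≤ c) (h : ∀ t : ℝ, 0 ≤ b * t + c * t ^ 2) : b = 0 := by
  have h1 := h (-b / (c + 1))
  have hc1 : (0:ℝ) < c + 1 := by linarith
  have h2 : b * (-b / (c + 1)) + c * (-b / (c + 1)) ^ 2 = -b^2 / (c+1)^2 := by
    field_simp; ring
  rw [h2] at h1
  have hp : (0:ℝ) < (c+1)^2 := pow_pos hc1 2
  have h3 : 0 ≤ -b ^ 2 := by
    calc (0:ℝ) ≤ (-b^2/(c+1)^2) * (c+1)^2 := mul_nonneg h1 hp.le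
    _ = -b^2 := by field_simp
  have h4 : b ^ 2 = 0 := le_antisymm (by linarith) (sq_nonneg b)
  exact pow_eq_zero_iff (two_ne_zero) |>.mp h4

private lemma euler_cond {H : Type*} [NormedAddCommGroup H] [InnerProductSpace ℝ H]
    (T : H →L[ℝ] H)
    (hsym : ∀ u v : H, ⟪T u, v⟫ = ⟪u, T v⟫) (hpos : ∀ u : H, 0 ≤ ⟪T u, u⟫)
    (x : H) (S : Submodule ℝ H)
    (hmin : ∀ δ ∈ S, ⟪T x, x⟫ ≤ ⟪T (x + δ), x + δ⟫) :
    ∀ δ ∈ S, ⟪T x, δ⟫ = 0 := by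
  intro δ hδ
  have key : ∀ t : ℝ, 0 ≤ (2 * ⟪T x, δ⟫) * t + ⟪T δ, δ⟫ * t ^ 2 := by
    intro t
    have h := hmin (t • δ) (S.smul_mem t hδ)
    have hcc : ⟪T δ, x⟫ = ⟪T x, δ⟫ := by
      rw [hsym δ x, real_inner_comm]
    have expand : ⟪T (x + t • δ), x + t • δ⟫ =
        ⟪T x, x⟫ + (2 * ⟪T x, δ⟫) * t + ⟪T δ, δ⟫ * t ^ 2 := by
      simp [map_add, map_smul, inner_add_left, inner_add_right, inner_smul_left,
        inner_smul_right, hcc]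
      ring
    rw [expand] at h
    linarith
  have := aux_quad (hpos δ) key
  linarith

/-- Expansion of the quadratic form of a symmetric operator along a sum. -/
private lemma quad_expand {H : Type*} [NormedAddCommGroup H] [InnerProductSpace ℝ H]
    (T : H →L[ℝ] H) (hsym : ∀ u v : H, ⟪T u, v⟫ = ⟪u, T v⟫) (x y : H) :
    ⟪T (x + y), x + y⟫ = ⟪T x, x⟫ + 2 * ⟪T x, y⟫ + ⟪T y, y⟫ := by
  have hcc : ⟪T y, x⟫ = ⟪T x, y⟫ := by rw [hsym y x, real_inner_comm]
  simp [map_add, inner_add_left, inner_add_right, hcc]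
  ring

/-- In the abstract duality setting (`H = U ⊕ E ⊕ J`, `A` symmetric coercive bounded with
inverse `Ainv`, `A_H` the primal homogenized matrix), the primal minimizer `e ∈ E` of
`⟨A(E₀+e), E₀+e⟩` and the dual minimizer `j ∈ J` of `⟨A⁻¹(J₀+j), J₀+j⟩` are connected by
`J₀ + j = A(E₀ + e)` whenever `J₀ = A_H E₀`, for any `E₀ ∈ ℝ^d` (identified with `U`). -/
theorem stmt_10 {d : ℕ} {H : Type*} [NormedAddCommGroup H] [InnerProductSpace ℝ H]
    [CompleteSpace H]
    (sU sE sJ : Submodule ℝ H)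
    (hUE : ∀ u ∈ sU, ∀ e ∈ sE, ⟪u, e⟫ = 0)
    (hUJ : ∀ u ∈ sU, ∀ j ∈ sJ, ⟪u, j⟫ = 0)
    (hEJ : ∀ e ∈ sE, ∀ j ∈ sJ, ⟪e, j⟫ = 0)
    (hspan : ∀ x : H, ∃ u ∈ sU, ∃ e ∈ sE, ∃ j ∈ sJ, x = u + e + j)
    (ι : EuclideanSpace ℝ (Fin d) ≃ₗᵢ[ℝ] sU)
    (A Ainv : H →L[ℝ] H)
    (hsym : ∀ u v : H, ⟪A u, v⟫ = ⟪u, A v⟫)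
    (c C : ℝ) (hc : 0 < c) (hcC : c ≤ C)
    (hcoer : ∀ u : H, c * ‖u‖ ^ 2 ≤ ⟪A u, u⟫)
    (hbd : ∀ u : H, ⟪A u, u⟫ ≤ C * ‖u‖ ^ 2)
    (hAinv1 : ∀ u : H, A (Ainv u) = u) (hAinv2 : ∀ u : H, Ainv (A u) = u)
    (AH : Matrix (Fin d) (Fin d) ℝ) (hAHs : AH.IsSymm)
    (hAH : ∀ E1 : EuclideanSpace ℝ (Fin d),
      IsLeast {r : ℝ | ∃ e ∈ sE, r = ⟪A ((ι E1 : H) + e), (ι E1 : H) + e⟫}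
        ⟪Matrix.toEuclideanLin AH E1, E1⟫)
    (E0 : EuclideanSpace ℝ (Fin d))
    (J0 : EuclideanSpace ℝ (Fin d)) (hJ0 : J0 = Matrix.toEuclideanLin AH E0)
    (e : H) (he : e ∈ sE)
    (hemin : ∀ e' ∈ sE,
      ⟪A ((ι E0 : H) + e), (ι E0 : H) + e⟫ ≤ ⟪A ((ι E0 : H) + e'), (ι E0 : H) + e'⟫)
    (j : H) (hj : j ∈ sJ)
    (hjmin : ∀ j' ∈ sJ,
      ⟪Ainv ((ι J0 : H) + j), (ι J0 : H) + j⟫ ≤ ⟪Ainv ((ι J0 : H) + j'), (ι J0 : H) + j'⟫) :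
    (ι J0 : H) + j = A ((ι E0 : H) + e) := by
  -- basic facts
  have hι : ∀ a b : EuclideanSpace ℝ (Fin d), ⟪(ι a : H), (ι b : H)⟫ = ⟪a, b⟫ := by
    intro a b; rw [← Submodule.coe_inner, ι.inner_map_map]
  have hApos : ∀ u : H, 0 ≤ ⟪A u, u⟫ := fun u => le_trans (by positivity) (hcoer u)
  have hAinvsym : ∀ u v : H, ⟪Ainv u, v⟫ = ⟪u, Ainv v⟫ := by
    intro u v
    conv_lhs => rw [← hAinv1 v]
    rw [← hsym, hAinv1]
  have hAinvpos : ∀ u : H, 0 ≤ ⟪Ainv u, u⟫ := by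
    intro u
    have h := hApos (Ainv u)
    rw [hAinv1] at h
    rw [real_inner_comm]
    exact h
  have hAHsym : ∀ x y : EuclideanSpace ℝ (Fin d),
      ⟪Matrix.toEuclideanLin AH x, y⟫ = ⟪x, Matrix.toEuclideanLin AH y⟫ := by
    have h : AH.IsHermitian := by
      rw [Matrix.IsHermitian, Matrix.conjTranspose]
      convert (show AH.transpose = AH from hAHs) using 1; ext i k; simp
    exact Matrix.isHermitian_iff_isSymmetric.mp h
  set x0 : H := (ι E0 : H) + e with hx0
  -- primal Euler condition for e
  have hPE : ∀ δ ∈ sE, ⟪A x0, δ⟫ = 0 := by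
    refine euler_cond A hsym hApos x0 sE ?_
    intro δ hδ
    have := hemin (e + δ) (sE.add_mem he hδ)
    simpa [hx0, add_assoc] using this
  -- the minimizer for an arbitrary E1
  have key : ∀ E1 : EuclideanSpace ℝ (Fin d), ⟪A x0, (ι E1 : H)⟫ = ⟪(ι J0 : H), (ι E1 : H)⟫ := by
    intro E1
    obtain ⟨⟨e1, he1, hval1⟩, hlb1⟩ := hAH E1
    set x1 : H := (ι E1 : H) + e1 with hx1
    -- Euler condition for e1
    have hPE1 : ∀ δ ∈ sE, ⟪A x1, δ⟫ = 0 := by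
      refine euler_cond A hsym hApos x1 sE ?_
      intro δ hδ
      have hmem : ⟪A ((ι E1 : H) + (e1 + δ)), (ι E1 : H) + (e1 + δ)⟫ ∈
          {r : ℝ | ∃ e ∈ sE, r = ⟪A ((ι E1 : H) + e), (ι E1 : H) + e⟫} :=
        ⟨e1 + δ, sE.add_mem he1 hδ, rfl⟩
      have := hlb1 hmem
      rw [hval1] at this
      simpa [hx1, add_assoc] using this
    -- q0 : the least value for E0 equals the value at e
    have q0 : ⟪A x0, x0⟫ = ⟪Matrix.toEuclideanLin AH E0, E0⟫ := by
      refine le_antisymm ?_ ((hAH E0).2 ⟨e, he, rfl⟩)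
      obtain ⟨e0', he0', hval0'⟩ := (hAH E0).1
      rw [hval0']
      exact hemin e0' he0'
    -- q1 : value at e1
    have q1 : ⟪A x1, x1⟫ = ⟪Matrix.toEuclideanLin AH E1, E1⟫ := hval1.symm
    -- e + e1 is a minimizer for E0 + E1
    have hsum : ((ι (E0 + E1) : sU) : H) = (ι E0 : H) + (ι E1 : H) := by simp
    have q01 : ⟪A (x0 + x1), x0 + x1⟫
        = ⟪Matrix.toEuclideanLin AH (E0 + E1), E0 + E1⟫ := by
      have hmem : ⟪A (x0 + x1), x0 + x1⟫ ∈
          {r : ℝ | ∃ e' ∈ sE, r = ⟪A ((ι (E0+E1) : H) + e'), (ι (E0+E1) : H) + e'⟫} := by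
        refine ⟨e + e1, sE.add_mem he he1, ?_⟩
        rw [hsum]
        congr 1 <;> · rw [hx0, hx1]; abel_nf
      refine le_antisymm ?_ ((hAH (E0 + E1)).2 hmem)
      obtain ⟨e2, he2, hval2⟩ := (hAH (E0 + E1)).1
      rw [hval2]
      set δ : H := e2 - (e + e1) with hδdef
      have hδ : δ ∈ sE := sE.sub_mem he2 (sE.add_mem he he1)
      have hrw : (ι (E0+E1) : H) + e2 = (x0 + x1) + δ := by
        rw [hsum, hδdef, hx0, hx1]; abel
      rw [hrw, quad_expand A hsym (x0 + x1) δ]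
      have hcross : ⟪A (x0 + x1), δ⟫ = 0 := by
        rw [map_add, inner_add_left, hPE δ hδ, hPE1 δ hδ]; ring
      rw [hcross]
      have := hApos δ
      linarith
    -- polarization
    have hexp : ⟪Matrix.toEuclideanLin AH (E0 + E1), E0 + E1⟫
        = ⟪Matrix.toEuclideanLin AH E0, E0⟫ + 2 * ⟪Matrix.toEuclideanLin AH E0, E1⟫
          + ⟪Matrix.toEuclideanLin AH E1, E1⟫ := by
      have hcc : ⟪Matrix.toEuclideanLin AH E1, E0⟫ = ⟪Matrix.toEuclideanLin AH E0, E1⟫ := by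
        rw [hAHsym E1 E0, real_inner_comm]
      rw [map_add, inner_add_left, inner_add_right, inner_add_right, hcc]
      ring
    have hpol : ⟪A x0, x1⟫ = ⟪Matrix.toEuclideanLin AH E0, E1⟫ := by
      have := quad_expand A hsym x0 x1
      rw [q01, hexp, q0, q1] at this
      linarith
    have : ⟪A x0, (ι E1 : H)⟫ = ⟪Matrix.toEuclideanLin AH E0, E1⟫ := by
      have h1 : ⟪A x0, e1⟫ = 0 := hPE e1 he1
      rw [hx1, inner_add_right, h1, add_zero] at hpol
      exact hpol
    rw [this, hι, hJ0]
  -- decompose A x0 - ι J0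
  obtain ⟨u, hu, e2, he2, j2, hj2, hz⟩ := hspan (A x0 - (ι J0 : H))
  have hzE : ∀ e' ∈ sE, ⟪A x0 - (ι J0 : H), e'⟫ = 0 := by
    intro e' he'
    rw [inner_sub_left, hPE e' he', hUE _ (SetLike.coe_mem (ι J0)) e' he']
    ring
  have hzU : ∀ u' ∈ sU, ⟪A x0 - (ι J0 : H), u'⟫ = 0 := by
    intro u' hu'
    have hrep : ((ι (ι.symm ⟨u', hu'⟩) : sU) : H) = u' := by simp
    rw [← hrep, inner_sub_left, key]
    ring
  have hu0 : u = 0 := by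
    have h1 : ⟪A x0 - (ι J0 : H), u⟫ = ⟪u, u⟫ := by
      have h_eu : ⟪e2, u⟫ = 0 := by rw [real_inner_comm]; exact hUE u hu e2 he2
      have h_ju : ⟪j2, u⟫ = 0 := by rw [real_inner_comm]; exact hUJ u hu j2 hj2
      rw [hz, inner_add_left, inner_add_left, h_eu, h_ju]
      ring
    have := hzU u hu
    rw [h1] at this
    exact inner_self_eq_zero.mp this
  have he20 : e2 = 0 := by
    have h1 : ⟪A x0 - (ι J0 : H), e2⟫ = ⟪e2, e2⟫ := by
      have h_je : ⟪j2, e2⟫ = 0 := by rw [real_inner_comm]; exact hEJ e2 he2 j2 hj2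
      rw [hz, inner_add_left, inner_add_left, hUE u hu e2 he2, h_je]
      ring
    have := hzE e2 he2
    rw [h1] at this
    exact inner_self_eq_zero.mp this
  have hAx0 : A x0 = (ι J0 : H) + j2 := by
    have : A x0 - (ι J0 : H) = j2 := by rw [hz, hu0, he20]; abel
    linear_combination (norm := module) this
  -- dual Euler condition for j2
  have hDE2 : ∀ δ ∈ sJ, ⟪Ainv ((ι J0 : H) + j2), δ⟫ = 0 := by
    intro δ hδ
    rw [← hAx0, hAinv2, hx0, inner_add_left,
      hUJ _ (SetLike.coe_mem (ι E0)) δ hδ, hEJ e he δ hδ]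
    ring
  -- dual Euler condition for j
  have hDE : ∀ δ ∈ sJ, ⟪Ainv ((ι J0 : H) + j), δ⟫ = 0 := by
    refine euler_cond Ainv hAinvsym hAinvpos _ sJ ?_
    intro δ hδ
    have := hjmin (j + δ) (sJ.add_mem hj hδ)
    simpa [add_assoc] using this
  -- conclude j = j2
  have hjj2 : j = j2 := by
    set δ : H := j - j2 with hδdef
    have hδ : δ ∈ sJ := sJ.sub_mem hj hj2
    have hsub : Ainv ((ι J0 : H) + j) - Ainv ((ι J0 : H) + j2) = Ainv δ := by
      rw [← map_sub]; congr 1; rw [hδdef]; abel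
    have h0 : ⟪Ainv δ, δ⟫ = 0 := by
      rw [← hsub, inner_sub_left, hDE δ hδ, hDE2 δ hδ]; ring
    have hw : ⟪A (Ainv δ), Ainv δ⟫ = 0 := by
      rw [hAinv1, real_inner_comm]; exact h0
    have hn : Ainv δ = 0 := by
      have := hcoer (Ainv δ)
      rw [hw] at this
      have h2 : ‖Ainv δ‖ ^ 2 ≤ 0 := by
        by_contra hcon
        push_neg at hcon
        nlinarith
      have : ‖Ainv δ‖ = 0 := by nlinarith [sq_nonneg ‖Ainv δ‖, norm_nonneg (Ainv δ)]
      exact norm_eq_zero.mp this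
    have : δ = 0 := by rw [← hAinv1 δ, hn, map_zero]
    rw [hδdef] at this
    exact sub_eq_zero.mp this
  rw [hjj2, hAx0]
end

section
/- Let A_H be the homogenized matrix and let ē_h^(α) ∈ E and j̄_h^(α) ∈ J be arbitrary conforming approximations of the auxiliary minimizers. Define the symmetric matrices Ā_{H,h} with entries a(e_β + ē_h^(β), e_α + ē_h^(α)) and B̄_{H,h} with entries a⁻¹(e_β + j̄_h^(β), e_α + j̄_h^(α)), where a(u,v) = ⟨Au,v⟩_{L²} and a⁻¹(u,v) = ⟨A⁻¹u,v⟩_{L²}, and e_α is the α-th unit vector. Then B̄_{H,h}⁻¹ ⪯ A_H ⪯ Ā_{H,h} in the Löwner order. -/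
open Matrix MeasureTheory

lemma aux_key {d : ℕ} {P : Matrix (Fin d) (Fin d) ℝ} (hP : P.PosDef)
    (u v : Fin d → ℝ) : 2*(u ⬝ᵥ v) - P.mulVec v ⬝ᵥ v ≤ P⁻¹.mulVec u ⬝ᵥ u := by
  have hdet : IsUnit P.det := isUnit_iff_ne_zero.mpr hP.det_pos.ne'
  have hPa : P.mulVec (P⁻¹.mulVec u) = u := by
    rw [Matrix.mulVec_mulVec, Matrix.mul_nonsing_inv P hdet, Matrix.one_mulVec]
  set a := P⁻¹.mulVec u with ha
  have hsym : Pᵀ = P := hP.isHermitian.eq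
  have h0 : 0 ≤ P.mulVec (a - v) ⬝ᵥ (a - v) := by
    rcases eq_or_ne (a - v) 0 with h | h
    · simp [h]
    · have := hP.dotProduct_mulVec_pos h
      simpa [dotProduct_comm] using this.le
  have e1 : P.mulVec (a - v) ⬝ᵥ (a - v)
      = P.mulVec a ⬝ᵥ a - P.mulVec a ⬝ᵥ v - P.mulVec v ⬝ᵥ a + P.mulVec v ⬝ᵥ v := by
    simp [Matrix.mulVec_sub, sub_dotProduct, dotProduct_sub]
    ring
  have e2 : P.mulVec v ⬝ᵥ a = P.mulVec a ⬝ᵥ v := by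
    rw [dotProduct_comm, Matrix.dotProduct_mulVec, ← Matrix.mulVec_transpose, hsym,
      dotProduct_comm _ v, Matrix.dotProduct_mulVec, ← Matrix.mulVec_transpose, hsym,
      dotProduct_comm]
  have e3 : P.mulVec a ⬝ᵥ v = u ⬝ᵥ v := by rw [hPa]
  have e4 : P.mulVec a ⬝ᵥ a = P⁻¹.mulVec u ⬝ᵥ u := by
    rw [hPa, ha, dotProduct_comm]
  rw [e1, e2, e3, e4] at h0
  linarith

lemma aux_inv_mono {d : ℕ} {M N : Matrix (Fin d) (Fin d) ℝ}
    (hM : M.PosDef) (hN : N.PosDef)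
    (h : ∀ u : Fin d → ℝ, M.mulVec u ⬝ᵥ u ≤ N.mulVec u ⬝ᵥ u) :
    ∀ u : Fin d → ℝ, N⁻¹.mulVec u ⬝ᵥ u ≤ M⁻¹.mulVec u ⬝ᵥ u := by
  intro u
  set v := N⁻¹.mulVec u with hv
  have hdet : IsUnit N.det := isUnit_iff_ne_zero.mpr hN.det_pos.ne'
  have hNv : N.mulVec v = u := by
    rw [hv, Matrix.mulVec_mulVec, Matrix.mul_nonsing_inv N hdet, Matrix.one_mulVec]
  have e1 : N⁻¹.mulVec u ⬝ᵥ u = 2*(u ⬝ᵥ v) - N.mulVec v ⬝ᵥ v := by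
    rw [hNv, ← hv, dotProduct_comm u v]; ring
  calc N⁻¹.mulVec u ⬝ᵥ u = 2*(u ⬝ᵥ v) - N.mulVec v ⬝ᵥ v := e1
    _ ≤ 2*(u ⬝ᵥ v) - M.mulVec v ⬝ᵥ v := by linarith [h v]
    _ ≤ M⁻¹.mulVec u ⬝ᵥ u := aux_key hM u v

lemma aux_sum_dp {d : ℕ} (f : Fin d → Fin d → ℝ) (w : Fin d → ℝ) :
    (∑ β, f β) ⬝ᵥ w = ∑ β, f β ⬝ᵥ w := by
  simp only [dotProduct, Finset.sum_apply, Finset.sum_mul]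
  exact Finset.sum_comm

lemma aux_expand {d : ℕ} (cell : Set (Fin d → ℝ))
    (M : (Fin d → ℝ) → Matrix (Fin d) (Fin d) ℝ)
    (g : Fin d → (Fin d → ℝ) → Fin d → ℝ)
    (hint : ∀ α β, IntegrableOn (fun x => (M x).mulVec (g β x) ⬝ᵥ (g α x)) cell volume)
    (u : Fin d → ℝ) :
    (∫ x in cell, (M x).mulVec (∑ β, u β • g β x) ⬝ᵥ (∑ α, u α • g α x))
    = ∑ α, ∑ β, u α * (u β * ∫ x in cell, (M x).mulVec (g β x) ⬝ᵥ (g α x)) := by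
  have hpt : ∀ x, (M x).mulVec (∑ β, u β • g β x) ⬝ᵥ (∑ α, u α • g α x)
      = ∑ α, ∑ β, u α * (u β * ((M x).mulVec (g β x) ⬝ᵥ (g α x))) := by
    intro x
    have hs : (M x).mulVec (∑ β, u β • g β x) = ∑ β, u β • (M x).mulVec (g β x) := by
      simp [Matrix.mulVec_sum, Matrix.mulVec_smul]
    rw [hs, dotProduct_comm, aux_sum_dp]
    refine Finset.sum_congr rfl fun α _ => ?_
    rw [smul_dotProduct, dotProduct_comm, aux_sum_dp, smul_eq_mul, Finset.mul_sum]
    refine Finset.sum_congr rfl fun β _ => ?_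
    rw [smul_dotProduct]
    simp only [smul_eq_mul]
  rw [MeasureTheory.integral_congr_ae (Filter.Eventually.of_forall hpt)]
  rw [MeasureTheory.integral_finset_sum]
  · refine Finset.sum_congr rfl fun α _ => ?_
    rw [MeasureTheory.integral_finset_sum]
    · refine Finset.sum_congr rfl fun β _ => ?_
      rw [MeasureTheory.integral_const_mul, MeasureTheory.integral_const_mul]
    · intro β _
      exact (((hint α β).const_mul (u β)).const_mul (u α))
  · intro α _
    exact MeasureTheory.integrable_finset_sum _ fun β _ =>
      (((hint α β).const_mul (u β)).const_mul (u α))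

/-- Generic step: the quadratic form of the "bar" matrix dominates that of the minimizer. -/
lemma aux_quad_s13 {d : ℕ} (cell : Set (Fin d → ℝ)) (Vinv : ℝ)
    (M : (Fin d → ℝ) → Matrix (Fin d) (Fin d) ℝ)
    (S : Submodule ℝ ((Fin d → ℝ) → Fin d → ℝ))
    (fh : Fin d → ((Fin d → ℝ) → Fin d → ℝ)) (hfh : ∀ α, fh α ∈ S)
    (hInt : ∀ f ∈ S, ∀ f' ∈ S, ∀ E E' : Fin d → ℝ,
      IntegrableOn (fun x => (M x).mulVec (E + f x) ⬝ᵥ (E' + f' x)) cell volume)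
    (H Bb : Matrix (Fin d) (Fin d) ℝ)
    (hH : ∀ E : Fin d → ℝ, IsLeast
      {r : ℝ | ∃ f ∈ S, r = Vinv * ∫ x in cell, (M x).mulVec (E + f x) ⬝ᵥ (E + f x)}
      (H.mulVec E ⬝ᵥ E))
    (hBb : ∀ α β, Bb α β = Vinv *
      ∫ x in cell, (M x).mulVec (Pi.single β 1 + fh β x) ⬝ᵥ (Pi.single α 1 + fh α x)) :
    ∀ u : Fin d → ℝ, H.mulVec u ⬝ᵥ u ≤ Bb.mulVec u ⬝ᵥ u := by
  intro u
  set g : Fin d → (Fin d → ℝ) → Fin d → ℝ := fun β x => Pi.single β 1 + fh β x with hg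
  have hint' : ∀ α β, IntegrableOn (fun x => (M x).mulVec (g β x) ⬝ᵥ (g α x)) cell volume :=
    fun α β => hInt (fh β) (hfh β) (fh α) (hfh α) (Pi.single β 1) (Pi.single α 1)
  set e : (Fin d → ℝ) → Fin d → ℝ := (∑ β, u β • fh β : _) with he'
  have he : e ∈ S := Submodule.sum_mem _ fun β _ => Submodule.smul_mem _ _ (hfh β)
  have hkey : ∀ x, (u + e x) = ∑ β, u β • g β x := by
    intro x
    have h2 : ∑ β, u β • (Pi.single β (1:ℝ) : Fin d → ℝ) = u := by
      ext i
      simp [Finset.sum_apply, Pi.single_apply]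
    have hex : e x = ∑ β, u β • fh β x := by
      simp [he', Finset.sum_apply]
    rw [hex]
    calc u + ∑ β, u β • fh β x
        = (∑ β, u β • (Pi.single β (1:ℝ) : Fin d → ℝ)) + ∑ β, u β • fh β x := by rw [h2]
      _ = ∑ β, (u β • (Pi.single β (1:ℝ) : Fin d → ℝ) + u β • fh β x) := by
          rw [Finset.sum_add_distrib]
      _ = ∑ β, u β • g β x := by
          refine Finset.sum_congr rfl fun β _ => ?_
          rw [hg]; rw [smul_add]
  have hintegral : (∫ x in cell, (M x).mulVec (u + e x) ⬝ᵥ (u + e x))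
      = ∑ α, ∑ β, u α * (u β * ∫ x in cell, (M x).mulVec (g β x) ⬝ᵥ (g α x)) := by
    rw [show (fun x => (M x).mulVec (u + e x) ⬝ᵥ (u + e x))
        = fun x => (M x).mulVec (∑ β, u β • g β x) ⬝ᵥ (∑ α, u α • g α x) from
      funext fun x => by rw [hkey x]]
    exact aux_expand cell M g hint' u
  have hBbu : Bb.mulVec u ⬝ᵥ u
      = Vinv * ∑ α, ∑ β, u α * (u β * ∫ x in cell, (M x).mulVec (g β x) ⬝ᵥ (g α x)) := by
    have h1 : Bb.mulVec u ⬝ᵥ u = ∑ α, ∑ β, Bb α β * u β * u α := by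
      simp only [Matrix.mulVec, dotProduct, Finset.sum_mul]
    rw [h1, Finset.mul_sum]
    refine Finset.sum_congr rfl fun α _ => ?_
    rw [Finset.mul_sum]
    refine Finset.sum_congr rfl fun β _ => ?_
    rw [hBb]
    ring
  have hmem : Bb.mulVec u ⬝ᵥ u ∈
      {r : ℝ | ∃ f ∈ S, r = Vinv * ∫ x in cell, (M x).mulVec (u + f x) ⬝ᵥ (u + f x)} :=
    ⟨e, he, by rw [hBbu, hintegral]⟩
  exact (hH u).2 hmem


/-- Guaranteed upper-lower bounds: with `A_H = B_H⁻¹` the primal/dual homogenized matrices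
(defined by minimization of `a(E+e, E+e)` over the curl-free space `S_E` and of
`a⁻¹(J+j, J+j)` over the divergence-free space `S_J`) and with arbitrary conforming
approximations `e_h^(α) ∈ S_E`, `j_h^(α) ∈ S_J`, the matrices
`Ā_{αβ} = a(e_β + e_h^(β), e_α + e_h^(α))` and `B̄_{αβ} = a⁻¹(e_β + j_h^(β), e_α + j_h^(α))`
(which are SPD) satisfy `B̄⁻¹ ⪯ A_H ⪯ Ā` in the Löwner order. -/
theorem stmt_13 {d : ℕ} (Y : Fin d → ℝ) (hY : ∀ α, 0 < Y α)
    (cell : Set (Fin d → ℝ))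
    (hcell : cell = Set.univ.pi fun α => Set.Ioo (-(Y α) / 2) (Y α / 2))
    (A : (Fin d → ℝ) → Matrix (Fin d) (Fin d) ℝ)
    (hAmeas : ∀ i j, Measurable fun x => A x i j)
    (hAsym : ∀ x, (A x).IsSymm)
    (c C : ℝ) (hc : 0 < c) (hcC : c ≤ C)
    (hell : ∀ (x : Fin d → ℝ) (v : Fin d → ℝ),
      c * (v ⬝ᵥ v) ≤ (A x).mulVec v ⬝ᵥ v ∧ (A x).mulVec v ⬝ᵥ v ≤ C * (v ⬝ᵥ v))
    -- conforming subspaces: zero-mean curl-free fields S_E and divergence-free fields S_J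
    (SE SJ : Submodule ℝ ((Fin d → ℝ) → Fin d → ℝ))
    (hSEmean : ∀ e ∈ SE, (∀ α, IntegrableOn (fun x => e x α) cell volume) ∧
      (∫ x in cell, e x) = 0)
    (hSJmean : ∀ j ∈ SJ, (∀ α, IntegrableOn (fun x => j x α) cell volume) ∧
      (∫ x in cell, j x) = 0)
    (hIntE : ∀ e ∈ SE, ∀ e' ∈ SE, ∀ E E' : Fin d → ℝ,
      IntegrableOn (fun x => (A x).mulVec (E + e x) ⬝ᵥ (E' + e' x)) cell volume)
    (hIntJ : ∀ j ∈ SJ, ∀ j' ∈ SJ, ∀ J J' : Fin d → ℝ,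
      IntegrableOn (fun x => (A x)⁻¹.mulVec (J + j x) ⬝ᵥ (J' + j' x)) cell volume)
    -- homogenized matrices
    (AH BH : Matrix (Fin d) (Fin d) ℝ)
    (hAHpd : AH.PosDef) (hBHpd : BH.PosDef) (hdual : AH = BH⁻¹)
    (hAH : ∀ E : Fin d → ℝ, IsLeast
      {r : ℝ | ∃ e ∈ SE, r = (∏ α, Y α)⁻¹ * ∫ x in cell, (A x).mulVec (E + e x) ⬝ᵥ (E + e x)}
      (AH.mulVec E ⬝ᵥ E))
    (hBH : ∀ J : Fin d → ℝ, IsLeast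
      {r : ℝ | ∃ j ∈ SJ, r = (∏ α, Y α)⁻¹ * ∫ x in cell, (A x)⁻¹.mulVec (J + j x) ⬝ᵥ (J + j x)}
      (BH.mulVec J ⬝ᵥ J))
    -- conforming approximate minimizers
    (eh jh : Fin d → ((Fin d → ℝ) → Fin d → ℝ))
    (heh : ∀ α, eh α ∈ SE) (hjh : ∀ α, jh α ∈ SJ)
    -- the upper-lower bound matrices
    (Abar Bbar : Matrix (Fin d) (Fin d) ℝ)
    (hAbar : ∀ α β, Abar α β = (∏ γ, Y γ)⁻¹ *
      ∫ x in cell, (A x).mulVec (Pi.single β 1 + eh β x) ⬝ᵥ (Pi.single α 1 + eh α x))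
    (hBbar : ∀ α β, Bbar α β = (∏ γ, Y γ)⁻¹ *
      ∫ x in cell, (A x)⁻¹.mulVec (Pi.single β 1 + jh β x) ⬝ᵥ (Pi.single α 1 + jh α x))
    (hAbarpd : Abar.PosDef) (hBbarpd : Bbar.PosDef) :
    (∀ u : Fin d → ℝ, Bbar⁻¹.mulVec u ⬝ᵥ u ≤ AH.mulVec u ⬝ᵥ u) ∧
    (∀ u : Fin d → ℝ, AH.mulVec u ⬝ᵥ u ≤ Abar.mulVec u ⬝ᵥ u) := by
  have hA : ∀ u : Fin d → ℝ, AH.mulVec u ⬝ᵥ u ≤ Abar.mulVec u ⬝ᵥ u :=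
    aux_quad_s13 cell (∏ α, Y α)⁻¹ A SE eh heh hIntE AH Abar hAH hAbar
  have hB : ∀ u : Fin d → ℝ, BH.mulVec u ⬝ᵥ u ≤ Bbar.mulVec u ⬝ᵥ u :=
    aux_quad_s13 cell (∏ α, Y α)⁻¹ (fun x => (A x)⁻¹) SJ jh hjh hIntJ BH Bbar hBH hBbar
  refine ⟨fun u => ?_, hA⟩
  rw [hdual]
  exact aux_inv_mono hBHpd hBbarpd hB u
end

section
/- For u_N, v_N trigonometric polynomials of degree N (odd grid) and A ∈ L^∞_per(Y; R^{d×d}), the exact integral ⟨A u_N, v_N⟩_{L²_#} equals the discrete double-grid quadrature ⟨A_{2N−1} u_N, v_N⟩ on the grid with 2N−1 points, where u_N, v_N are evaluated at the finer grid points x_{2N−1}^k and A_{2N−1}^{km} = δ_{km} Σ_{n∈Z^d_{2N−1}} ω_{2N−1}^{kn} Â(n) is block diagonal, built from the Fourier coefficients Â(n) of A. -/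
open Matrix MeasureTheory

lemma sum_zpow_Icc (ζ : ℂ) (a : ℤ) (M : ℕ) (hM : 0 < M) (hζ : ζ ≠ 0) (h1 : ζ ^ (M : ℕ) = 1) :
    ∑ k ∈ Finset.Icc a (a + M - 1), ζ ^ k = if ζ = 1 then (M : ℂ) else 0 := by
  have hre : ∑ k ∈ Finset.Icc a (a + M - 1), ζ ^ k = ∑ i ∈ Finset.range M, ζ ^ (a + (i : ℤ)) := by
    refine Finset.sum_nbij' (fun k => (k - a).toNat) (fun i => a + (i : ℤ)) ?_ ?_ ?_ ?_ ?_
    · intro x hx; simp only [Finset.mem_Icc] at hx; simp only [Finset.mem_range]; omega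
    · intro i hi; simp only [Finset.mem_range] at hi; simp only [Finset.mem_Icc]; omega
    · intro x hx; simp only [Finset.mem_Icc] at hx
      show a + (((x - a).toNat : ℕ) : ℤ) = x; omega
    · intro i hi; simp only [Finset.mem_range] at hi
      show (a + (i:ℤ) - a).toNat = i; omega
    · intro x hx; simp only [Finset.mem_Icc] at hx
      show ζ ^ x = ζ ^ (a + (((x - a).toNat : ℕ) : ℤ)); congr 1; omega
  rw [hre]
  by_cases h : ζ = 1
  · simp [h]
  · simp only [h, if_false]
    have : ∀ i ∈ Finset.range M, ζ ^ (a + (i : ℤ)) = ζ ^ a * ζ ^ (i : ℕ) := by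
      intro i _; rw [zpow_add₀ hζ, zpow_natCast]
    rw [Finset.sum_congr rfl this, ← Finset.mul_sum, geom_sum_eq h, h1]
    simp

lemma sum_exp_Icc (M : ℕ) (hM : 0 < M) (a r : ℤ) (hr : |r| < (M : ℤ)) :
    ∑ k ∈ Finset.Icc a (a + M - 1),
      Complex.exp (2 * Real.pi * Complex.I * ((k : ℂ) * (r : ℂ) / ((M : ℝ) : ℂ))) =
      if r = 0 then (M : ℂ) else 0 := by
  have hM0 : ((M : ℝ) : ℂ) ≠ 0 := by
    simp only [ne_eq, Complex.ofReal_natCast, Nat.cast_eq_zero]; omega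
  set ζ : ℂ := Complex.exp (2 * Real.pi * Complex.I * ((r : ℂ) / ((M : ℝ) : ℂ))) with hζdef
  have hterm : ∀ k : ℤ, Complex.exp (2 * Real.pi * Complex.I * ((k : ℂ) * (r : ℂ) / ((M : ℝ) : ℂ)))
      = ζ ^ k := by
    intro k
    rw [hζdef, ← Complex.exp_int_mul]
    congr 1; ring
  have hζ0 : ζ ≠ 0 := Complex.exp_ne_zero _
  have hζM : ζ ^ (M : ℕ) = 1 := by
    rw [hζdef, ← Complex.exp_nat_mul]
    have hMc : (M : ℂ) ≠ 0 := Nat.cast_ne_zero.2 hM.ne'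
    have : (M : ℂ) * (2 * Real.pi * Complex.I * ((r : ℂ) / ((M : ℝ) : ℂ))) = (r : ℂ) * (2 * Real.pi * Complex.I) := by
      push_cast
      field_simp
    rw [this, Complex.exp_int_mul_two_pi_mul_I]
  have hiff : ζ = 1 ↔ r = 0 := by
    constructor
    · intro h1
      rw [hζdef, Complex.exp_eq_one_iff] at h1
      obtain ⟨n, hn⟩ := h1
      have h2πI : (2 * Real.pi * Complex.I) ≠ 0 := by
        simp [Real.pi_ne_zero, Complex.I_ne_zero]
      have hMc : (M : ℂ) ≠ 0 := Nat.cast_ne_zero.2 hM.ne'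
      push_cast at hn
      have : (r : ℂ) = (n : ℂ) * (M : ℂ) := by
        have h3 : (2 * Real.pi * Complex.I) * ((r : ℂ) / (M : ℂ)) = (2 * Real.pi * Complex.I) * (n : ℂ) := by
          linear_combination hn
        have h4 := mul_left_cancel₀ h2πI h3
        rw [div_eq_iff hMc] at h4
        rw [h4]
      have hrnM : r = n * (M : ℤ) := by exact_mod_cast this
      rcases eq_or_ne n 0 with h0 | h0
      · simp [h0] at hrnM; exact hrnM
      · exfalso
        have h1n : 1 ≤ |n| := Int.one_le_abs h0
        have : |r| = |n| * (M : ℤ) := by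
          rw [hrnM, abs_mul, abs_of_pos (by exact_mod_cast hM : (0:ℤ) < (M:ℤ))]
        nlinarith
    · intro h; rw [hζdef, h]; simp
  calc ∑ k ∈ Finset.Icc a (a + M - 1),
      Complex.exp (2 * Real.pi * Complex.I * ((k : ℂ) * (r : ℂ) / ((M : ℝ) : ℂ)))
      = ∑ k ∈ Finset.Icc a (a + M - 1), ζ ^ k := Finset.sum_congr rfl (fun k _ => hterm k)
    _ = if ζ = 1 then (M : ℂ) else 0 := sum_zpow_Icc ζ a M hM hζ0 hζM
    _ = if r = 0 then (M : ℂ) else 0 := by rw [if_congr hiff rfl rfl]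

lemma disc_orth {d : ℕ} (N : Fin d → ℕ) (hNpos : ∀ α, 0 < N α)
    (Zd2N : Finset (Fin d → ℤ))
    (hZd2N : ∀ k : Fin d → ℤ, k ∈ Zd2N ↔
      ∀ α, -((2 * N α - 1 : ℕ) : ℤ) ≤ 2 * k α ∧ 2 * k α < ((2 * N α - 1 : ℕ) : ℤ))
    (r : Fin d → ℤ) (hr : ∀ α, |r α| < ((2 * N α - 1 : ℕ) : ℤ)) :
    ∑ K ∈ Zd2N, Complex.exp (2 * Real.pi * Complex.I *
        ∑ α, (K α : ℂ) * (r α : ℂ) / (((2 * N α - 1 : ℕ) : ℝ) : ℂ)) =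
      if r = 0 then ∏ α, ((2 * N α - 1 : ℕ) : ℂ) else 0 := by
  have hset : Zd2N = Fintype.piFinset (fun α => Finset.Icc (1 - (N α : ℤ)) ((N α : ℤ) - 1)) := by
    ext k
    rw [hZd2N, Fintype.mem_piFinset]
    constructor
    · intro h α; have := h α; simp only [Finset.mem_Icc]; omega
    · intro h α; have := h α; simp only [Finset.mem_Icc] at this; omega
  have hterm : ∀ K : Fin d → ℤ, Complex.exp (2 * Real.pi * Complex.I *
        ∑ α, (K α : ℂ) * (r α : ℂ) / (((2 * N α - 1 : ℕ) : ℝ) : ℂ)) =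
      ∏ α, Complex.exp (2 * Real.pi * Complex.I *
        ((K α : ℂ) * (r α : ℂ) / (((2 * N α - 1 : ℕ) : ℝ) : ℂ))) := by
    intro K
    rw [← Complex.exp_sum, Finset.mul_sum]
  rw [Finset.sum_congr rfl (fun K _ => hterm K), hset,
    ← Finset.prod_univ_sum (fun α => Finset.Icc (1 - (N α : ℤ)) ((N α : ℤ) - 1))
      (fun α k => Complex.exp (2 * Real.pi * Complex.I *
        ((k : ℂ) * (r α : ℂ) / (((2 * N α - 1 : ℕ) : ℝ) : ℂ))))]
  have hfac : ∀ α : Fin d, ∑ k ∈ Finset.Icc (1 - (N α : ℤ)) ((N α : ℤ) - 1),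
      Complex.exp (2 * Real.pi * Complex.I *
        ((k : ℂ) * (r α : ℂ) / (((2 * N α - 1 : ℕ) : ℝ) : ℂ))) =
      if r α = 0 then ((2 * N α - 1 : ℕ) : ℂ) else 0 := by
    intro α
    have hend : ((N α : ℤ) - 1) = (1 - (N α : ℤ)) + ((2 * N α - 1 : ℕ) : ℤ) - 1 := by
      have := hNpos α; omega
    rw [hend]
    exact sum_exp_Icc (2 * N α - 1) (by have := hNpos α; omega) (1 - (N α : ℤ)) (r α) (hr α)
  rw [Finset.prod_congr rfl (fun α _ => hfac α)]
  by_cases hr0 : r = 0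
  · simp [hr0]
  · obtain ⟨α, hα⟩ : ∃ α, r α ≠ 0 := by
      by_contra h; push_neg at h; exact hr0 (funext h)
    rw [if_neg hr0]
    exact Finset.prod_eq_zero (Finset.mem_univ α) (by simp [hα])

lemma expand_bilin {A' B' K' M' : Type*} (sa : Finset A') (sb : Finset B')
    (sk : Finset K') (sm : Finset M')
    (a : A' → B' → ℂ) (u : K' → B' → ℂ) (v : M' → A' → ℂ) :
    ∑ p ∈ sa, ∑ q ∈ sb, a p q * (∑ k ∈ sk, u k q) * (∑ m ∈ sm, v m p)
      = ∑ k ∈ sk, ∑ m ∈ sm, ∑ p ∈ sa, ∑ q ∈ sb, a p q * u k q * v m p := by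
  have h1 : ∀ p q, a p q * (∑ k ∈ sk, u k q) * (∑ m ∈ sm, v m p)
      = ∑ k ∈ sk, ∑ m ∈ sm, a p q * u k q * v m p := by
    intro p q
    simp only [Finset.mul_sum, Finset.sum_mul]
    rw [Finset.sum_comm]
  calc ∑ p ∈ sa, ∑ q ∈ sb, a p q * (∑ k ∈ sk, u k q) * (∑ m ∈ sm, v m p)
      = ∑ p ∈ sa, ∑ q ∈ sb, ∑ k ∈ sk, ∑ m ∈ sm, a p q * u k q * v m p :=
        Finset.sum_congr rfl fun p _ => Finset.sum_congr rfl fun q _ => h1 p q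
    _ = ∑ p ∈ sa, ∑ k ∈ sk, ∑ q ∈ sb, ∑ m ∈ sm, a p q * u k q * v m p :=
        Finset.sum_congr rfl fun p _ => Finset.sum_comm
    _ = ∑ k ∈ sk, ∑ p ∈ sa, ∑ q ∈ sb, ∑ m ∈ sm, a p q * u k q * v m p := Finset.sum_comm
    _ = ∑ k ∈ sk, ∑ p ∈ sa, ∑ m ∈ sm, ∑ q ∈ sb, a p q * u k q * v m p :=
        Finset.sum_congr rfl fun k _ => Finset.sum_congr rfl fun p _ => Finset.sum_comm
    _ = ∑ k ∈ sk, ∑ m ∈ sm, ∑ p ∈ sa, ∑ q ∈ sb, a p q * u k q * v m p :=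
        Finset.sum_congr rfl fun k _ => Finset.sum_comm

lemma sum_push5 {K' I1 I2 I3 I4 I5 : Type*} (sK : Finset K') (s1 : Finset I1) (s2 : Finset I2)
    (s3 : Finset I3) (s4 : Finset I4) (s5 : Finset I5) (f : K' → I1 → I2 → I3 → I4 → I5 → ℂ) :
    ∑ K ∈ sK, ∑ a ∈ s1, ∑ b ∈ s2, ∑ c ∈ s3, ∑ e ∈ s4, ∑ n ∈ s5, f K a b c e n
      = ∑ a ∈ s1, ∑ b ∈ s2, ∑ c ∈ s3, ∑ e ∈ s4, ∑ n ∈ s5, ∑ K ∈ sK, f K a b c e n := by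
  rw [Finset.sum_comm]
  refine Finset.sum_congr rfl fun a _ => ?_
  rw [Finset.sum_comm]
  refine Finset.sum_congr rfl fun b _ => ?_
  rw [Finset.sum_comm]
  refine Finset.sum_congr rfl fun c _ => ?_
  rw [Finset.sum_comm]
  refine Finset.sum_congr rfl fun e _ => ?_
  exact Finset.sum_comm

lemma integral_sum4 {X : Type*} [MeasurableSpace X] (μ : MeasureTheory.Measure X)
    {I1 I2 I3 I4 : Type*} (s1 : Finset I1) (s2 : Finset I2) (s3 : Finset I3) (s4 : Finset I4)
    (f : I1 → I2 → I3 → I4 → X → ℂ) (hf : ∀ k m a b, MeasureTheory.Integrable (f k m a b) μ) :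
    ∫ x, (∑ k ∈ s1, ∑ m ∈ s2, ∑ a ∈ s3, ∑ b ∈ s4, f k m a b x) ∂μ
      = ∑ k ∈ s1, ∑ m ∈ s2, ∑ a ∈ s3, ∑ b ∈ s4, ∫ x, f k m a b x ∂μ := by
  rw [MeasureTheory.integral_finset_sum _ (fun k _ => MeasureTheory.integrable_finset_sum _
    fun m _ => MeasureTheory.integrable_finset_sum _ fun a _ =>
      MeasureTheory.integrable_finset_sum _ fun b _ => hf k m a b)]
  refine Finset.sum_congr rfl fun k _ => ?_
  rw [MeasureTheory.integral_finset_sum _ (fun m _ => MeasureTheory.integrable_finset_sum _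
    fun a _ => MeasureTheory.integrable_finset_sum _ fun b _ => hf k m a b)]
  refine Finset.sum_congr rfl fun m _ => ?_
  rw [MeasureTheory.integral_finset_sum _ (fun a _ =>
    MeasureTheory.integrable_finset_sum _ fun b _ => hf k m a b)]
  exact Finset.sum_congr rfl fun a _ =>
    MeasureTheory.integral_finset_sum _ fun b _ => hf k m a b
set_option maxHeartbeats 2000000 in
/-- Double-grid quadrature (odd grid): for trigonometric polynomials `u_N, v_N` of degree `N`
(real-valued, i.e. with Hermitian-symmetric coefficients) and `A ∈ L^∞_per(Y; ℝ^{d×d})`, the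
exact integral `⟨A u_N, v_N⟩_{L²_#}` equals the discrete double-grid quadrature on the grid
with `2N−1` points: `(1/|2N−1|) Σ_{k ∈ Z^d_{2N−1}} ⟨A_{2N−1}^{kk} u_N(x_{2N−1}^k), v_N(x_{2N−1}^k)⟩`,
where `A_{2N−1}^{kk} = Σ_{n ∈ Z^d_{2N−1}} ω_{2N−1}^{kn} Â(n)` is built from the Fourier
coefficients `Â(n)` of `A`. -/
theorem stmt_19 {d : ℕ} (Y : Fin d → ℝ) (hY : ∀ α, 0 < Y α)
    (N : Fin d → ℕ) (hNpos : ∀ α, 0 < N α) (hNodd : ∀ α, Odd (N α))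
    (cell : Set (Fin d → ℝ))
    (hcell : cell = Set.univ.pi fun α => Set.Ioo (-(Y α) / 2) (Y α / 2))
    (A : (Fin d → ℝ) → Matrix (Fin d) (Fin d) ℝ)
    (hAmeas : ∀ i j, Measurable fun x => A x i j)
    (hAbdd : ∃ C : ℝ, ∀ x i j, |A x i j| ≤ C)
    (ZdN Zd2N : Finset (Fin d → ℤ))
    (hZdN : ∀ k : Fin d → ℤ, k ∈ ZdN ↔ ∀ α, -(N α : ℤ) ≤ 2 * k α ∧ 2 * k α < (N α : ℤ))
    (hZd2N : ∀ k : Fin d → ℤ, k ∈ Zd2N ↔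
      ∀ α, -((2 * N α - 1 : ℕ) : ℤ) ≤ 2 * k α ∧ 2 * k α < ((2 * N α - 1 : ℕ) : ℤ))
    (uc vc : (Fin d → ℤ) → Fin d → ℂ)
    (hu : ∀ k α, uc (-k) α = starRingEnd ℂ (uc k α))
    (hv : ∀ k α, vc (-k) α = starRingEnd ℂ (vc k α))
    (uN vN : (Fin d → ℝ) → Fin d → ℂ)
    (huN : ∀ (x : Fin d → ℝ) (α : Fin d), uN x α = ∑ k ∈ ZdN, uc k α *
      Complex.exp (2 * Real.pi * Complex.I * ∑ β, (k β : ℂ) * (x β : ℂ) / (Y β : ℂ)))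
    (hvN : ∀ (x : Fin d → ℝ) (α : Fin d), vN x α = ∑ k ∈ ZdN, vc k α *
      Complex.exp (2 * Real.pi * Complex.I * ∑ β, (k β : ℂ) * (x β : ℂ) / (Y β : ℂ)))
    (Ahat : (Fin d → ℤ) → Matrix (Fin d) (Fin d) ℂ)
    (hAhat : ∀ n i j, Ahat n i j = (((∏ α, Y α)⁻¹ : ℝ) : ℂ) *
      ∫ x in cell, (A x i j : ℂ) *
        Complex.exp (-(2 * Real.pi * Complex.I * ∑ β, (n β : ℂ) * (x β : ℂ) / (Y β : ℂ))))
    (gridM : (Fin d → ℤ) → Fin d → ℝ)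
    (hgrid : ∀ (k : Fin d → ℤ) (α : Fin d),
      gridM k α = Y α * (k α : ℝ) / ((2 * N α - 1 : ℕ) : ℝ))
    (AM : (Fin d → ℤ) → Matrix (Fin d) (Fin d) ℂ)
    (hAM : ∀ (k : Fin d → ℤ) (i j : Fin d), AM k i j = ∑ n ∈ Zd2N,
      Complex.exp (2 * Real.pi * Complex.I *
        ∑ α, (k α : ℂ) * (n α : ℂ) / (((2 * N α - 1 : ℕ) : ℝ) : ℂ)) * Ahat n i j) :
    (((∏ α, Y α)⁻¹ : ℝ) : ℂ) *
        ∫ x in cell, ∑ α, ∑ β, (A x α β : ℂ) * uN x β * starRingEnd ℂ (vN x α) =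
      (∏ α, ((2 * N α - 1 : ℕ) : ℂ))⁻¹ * ∑ k ∈ Zd2N, ∑ α, ∑ β,
        AM k α β * uN (gridM k) β * starRingEnd ℂ (vN (gridM k) α) := by
  classical
  have hMc0 : ∀ α, (((2 * N α - 1 : ℕ) : ℝ) : ℂ) ≠ 0 := by
    intro α; have := hNpos α
    simp only [ne_eq, Complex.ofReal_natCast, Nat.cast_eq_zero]; omega
  have hYc0 : ∀ α, ((Y α : ℝ) : ℂ) ≠ 0 := fun α => by
    simp only [ne_eq, Complex.ofReal_eq_zero]; exact (hY α).ne'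
  have hPM0 : (∏ α, ((2 * N α - 1 : ℕ) : ℂ)) ≠ 0 := Finset.prod_ne_zero_iff.2 fun α _ => by
    have := hNpos α; simp only [ne_eq, Nat.cast_eq_zero]; omega
  -- conjugation of exponentials
  have hconjE : ∀ (n : Fin d → ℤ) (x : Fin d → ℝ),
      starRingEnd ℂ (Complex.exp (2 * Real.pi * Complex.I *
          ∑ β, (n β : ℂ) * (x β : ℂ) / (Y β : ℂ)))
        = Complex.exp (-(2 * Real.pi * Complex.I *
          ∑ β, (n β : ℂ) * (x β : ℂ) / (Y β : ℂ))) := by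
    intro n x
    rw [← Complex.exp_conj]
    congr 1
    simp only [_root_.map_mul, map_sum, map_div₀, map_ofNat, Complex.conj_ofReal, Complex.conj_I,
      map_intCast]
    ring
  have hmulE : ∀ (k m : Fin d → ℤ) (x : Fin d → ℝ),
      Complex.exp (2 * Real.pi * Complex.I * ∑ β, (k β : ℂ) * (x β : ℂ) / (Y β : ℂ)) *
        Complex.exp (-(2 * Real.pi * Complex.I * ∑ β, (m β : ℂ) * (x β : ℂ) / (Y β : ℂ)))
        = Complex.exp (-(2 * Real.pi * Complex.I *
            ∑ β, ((m - k) β : ℂ) * (x β : ℂ) / (Y β : ℂ))) := by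
    intro k m x
    rw [← Complex.exp_add]
    congr 1
    have h : ∀ β : Fin d, ((m - k) β : ℂ) * (x β : ℂ) / (Y β : ℂ)
        = (m β : ℂ) * (x β : ℂ) / (Y β : ℂ) - (k β : ℂ) * (x β : ℂ) / (Y β : ℂ) := by
      intro β
      have h0 : (m - k) β = m β - k β := rfl
      rw [h0]; push_cast; ring
    rw [Finset.sum_congr rfl fun β _ => h β, Finset.sum_sub_distrib]
    ring
  -- measure-theoretic facts
  have hvol : volume cell < ⊤ := by
    rw [hcell, volume_pi_pi]
    exact ENNReal.prod_lt_top fun α _ => by rw [Real.volume_Ioo]; exact ENNReal.ofReal_lt_top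
  have hnormE : ∀ (n : Fin d → ℤ) (x : Fin d → ℝ),
      ‖Complex.exp (-(2 * Real.pi * Complex.I *
        ∑ β, (n β : ℂ) * (x β : ℂ) / (Y β : ℂ)))‖ = 1 := by
    intro n x
    have h : -(2 * Real.pi * Complex.I * ∑ β, (n β : ℂ) * (x β : ℂ) / (Y β : ℂ))
        = ((-(2 * Real.pi * ∑ β, (n β : ℝ) * x β / Y β) : ℝ) : ℂ) * Complex.I := by
      push_cast; ring
    rw [h, Complex.norm_exp_ofReal_mul_I]
  have hmeasE : ∀ (n : Fin d → ℤ), Measurable fun (x : Fin d → ℝ) =>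
      Complex.exp (-(2 * Real.pi * Complex.I *
        ∑ β, (n β : ℂ) * (x β : ℂ) / (Y β : ℂ))) := by
    intro n
    apply Complex.continuous_exp.measurable.comp
    apply Measurable.neg
    apply Measurable.const_mul
    apply Finset.measurable_sum
    intro β _
    exact ((Complex.measurable_ofReal.comp (measurable_pi_apply β)).const_mul _).div_const _
  obtain ⟨C, hC⟩ := hAbdd
  have hint : ∀ (n : Fin d → ℤ) (α β : Fin d),
      IntegrableOn (fun x => (A x α β : ℂ) *
        Complex.exp (-(2 * Real.pi * Complex.I *
          ∑ γ, (n γ : ℂ) * (x γ : ℂ) / (Y γ : ℂ)))) cell := by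
    intro n α β
    have hmeas : Measurable fun x : Fin d → ℝ => (A x α β : ℂ) *
        Complex.exp (-(2 * Real.pi * Complex.I *
          ∑ γ, (n γ : ℂ) * (x γ : ℂ) / (Y γ : ℂ))) :=
      (Complex.measurable_ofReal.comp (hAmeas α β)).mul (hmeasE n)
    refine MeasureTheory.Integrable.mono' (g := fun _ => max C 0)
      ((MeasureTheory.integrableOn_const_iff (C := max C 0) enorm_ne_top).2 (Or.inr hvol)) hmeas.aestronglyMeasurable ?_
    filter_upwards with x
    rw [norm_mul, hnormE n x, mul_one, Complex.norm_real, Real.norm_eq_abs]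
    exact le_trans (hC x α β) (le_max_left _ _)
  have hconjv : ∀ (x : Fin d → ℝ) (α : Fin d), starRingEnd ℂ (vN x α)
      = ∑ m ∈ ZdN, starRingEnd ℂ (vc m α) *
          Complex.exp (-(2 * Real.pi * Complex.I *
            ∑ β, (m β : ℂ) * (x β : ℂ) / (Y β : ℂ))) := by
    intro x α
    rw [hvN x α, map_sum]
    exact Finset.sum_congr rfl fun m _ => by rw [_root_.map_mul, hconjE]
  -- LHS
  have hL : (((∏ α, Y α)⁻¹ : ℝ) : ℂ) *
      (∫ x in cell, ∑ α, ∑ β, (A x α β : ℂ) * uN x β * starRingEnd ℂ (vN x α))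
      = ∑ k ∈ ZdN, ∑ m ∈ ZdN, ∑ α, ∑ β,
          (uc k β * starRingEnd ℂ (vc m α)) * Ahat (m - k) α β := by
    have hpt : ∀ x : Fin d → ℝ,
        (∑ α, ∑ β, (A x α β : ℂ) * uN x β * starRingEnd ℂ (vN x α))
        = ∑ k ∈ ZdN, ∑ m ∈ ZdN, ∑ α, ∑ β, (uc k β * starRingEnd ℂ (vc m α)) *
            ((A x α β : ℂ) * Complex.exp (-(2 * Real.pi * Complex.I *
              ∑ γ, ((m - k) γ : ℂ) * (x γ : ℂ) / (Y γ : ℂ)))) := by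
      intro x
      calc (∑ α, ∑ β, (A x α β : ℂ) * uN x β * starRingEnd ℂ (vN x α))
          = ∑ α, ∑ β, (A x α β : ℂ) *
              (∑ k ∈ ZdN, uc k β * Complex.exp (2 * Real.pi * Complex.I *
                ∑ γ, (k γ : ℂ) * (x γ : ℂ) / (Y γ : ℂ))) *
              (∑ m ∈ ZdN, starRingEnd ℂ (vc m α) * Complex.exp (-(2 * Real.pi * Complex.I *
                ∑ γ, (m γ : ℂ) * (x γ : ℂ) / (Y γ : ℂ)))) := by
            refine Finset.sum_congr rfl fun α _ => Finset.sum_congr rfl fun β _ => ?_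
            rw [huN x β, hconjv x α]
        _ = ∑ k ∈ ZdN, ∑ m ∈ ZdN, ∑ α, ∑ β, (A x α β : ℂ) *
              (uc k β * Complex.exp (2 * Real.pi * Complex.I *
                ∑ γ, (k γ : ℂ) * (x γ : ℂ) / (Y γ : ℂ))) *
              (starRingEnd ℂ (vc m α) * Complex.exp (-(2 * Real.pi * Complex.I *
                ∑ γ, (m γ : ℂ) * (x γ : ℂ) / (Y γ : ℂ)))) :=
            expand_bilin Finset.univ Finset.univ ZdN ZdN
              (fun α β => (A x α β : ℂ))
              (fun k β => uc k β * Complex.exp (2 * Real.pi * Complex.I *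
                ∑ γ, (k γ : ℂ) * (x γ : ℂ) / (Y γ : ℂ)))
              (fun m α => starRingEnd ℂ (vc m α) * Complex.exp (-(2 * Real.pi * Complex.I *
                ∑ γ, (m γ : ℂ) * (x γ : ℂ) / (Y γ : ℂ))))
        _ = ∑ k ∈ ZdN, ∑ m ∈ ZdN, ∑ α, ∑ β, (uc k β * starRingEnd ℂ (vc m α)) *
              ((A x α β : ℂ) * Complex.exp (-(2 * Real.pi * Complex.I *
                ∑ γ, ((m - k) γ : ℂ) * (x γ : ℂ) / (Y γ : ℂ)))) := by
            refine Finset.sum_congr rfl fun k _ => Finset.sum_congr rfl fun m _ =>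
              Finset.sum_congr rfl fun α _ => Finset.sum_congr rfl fun β _ => ?_
            rw [show (A x α β : ℂ) *
              (uc k β * Complex.exp (2 * Real.pi * Complex.I *
                ∑ γ, (k γ : ℂ) * (x γ : ℂ) / (Y γ : ℂ))) *
              (starRingEnd ℂ (vc m α) * Complex.exp (-(2 * Real.pi * Complex.I *
                ∑ γ, (m γ : ℂ) * (x γ : ℂ) / (Y γ : ℂ))))
              = (uc k β * starRingEnd ℂ (vc m α)) * ((A x α β : ℂ) *
                (Complex.exp (2 * Real.pi * Complex.I *
                  ∑ γ, (k γ : ℂ) * (x γ : ℂ) / (Y γ : ℂ)) *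
                 Complex.exp (-(2 * Real.pi * Complex.I *
                  ∑ γ, (m γ : ℂ) * (x γ : ℂ) / (Y γ : ℂ))))) from by ring,
              hmulE k m x]
    calc (((∏ α, Y α)⁻¹ : ℝ) : ℂ) *
        (∫ x in cell, ∑ α, ∑ β, (A x α β : ℂ) * uN x β * starRingEnd ℂ (vN x α))
        = (((∏ α, Y α)⁻¹ : ℝ) : ℂ) *
          ∫ x in cell, ∑ k ∈ ZdN, ∑ m ∈ ZdN, ∑ α, ∑ β, (uc k β * starRingEnd ℂ (vc m α)) *
            ((A x α β : ℂ) * Complex.exp (-(2 * Real.pi * Complex.I *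
              ∑ γ, ((m - k) γ : ℂ) * (x γ : ℂ) / (Y γ : ℂ)))) := by
          congr 1
          exact MeasureTheory.integral_congr_ae (Filter.Eventually.of_forall hpt)
      _ = (((∏ α, Y α)⁻¹ : ℝ) : ℂ) *
          ∑ k ∈ ZdN, ∑ m ∈ ZdN, ∑ α, ∑ β,
            ∫ x in cell, (uc k β * starRingEnd ℂ (vc m α)) *
              ((A x α β : ℂ) * Complex.exp (-(2 * Real.pi * Complex.I *
                ∑ γ, ((m - k) γ : ℂ) * (x γ : ℂ) / (Y γ : ℂ)))) := by
          congr 1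
          exact integral_sum4 _ ZdN ZdN Finset.univ Finset.univ
            (fun k m α β x => (uc k β * starRingEnd ℂ (vc m α)) *
              ((A x α β : ℂ) * Complex.exp (-(2 * Real.pi * Complex.I *
                ∑ γ, ((m - k) γ : ℂ) * (x γ : ℂ) / (Y γ : ℂ)))))
            (fun k m α β => (hint (m - k) α β).const_mul _)
      _ = ∑ k ∈ ZdN, ∑ m ∈ ZdN, ∑ α, ∑ β,
            (uc k β * starRingEnd ℂ (vc m α)) * Ahat (m - k) α β := by
          rw [Finset.mul_sum ZdN]
          refine Finset.sum_congr rfl fun k _ => ?_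
          rw [Finset.mul_sum ZdN]
          refine Finset.sum_congr rfl fun m _ => ?_
          rw [Finset.mul_sum Finset.univ]
          refine Finset.sum_congr rfl fun α _ => ?_
          rw [Finset.mul_sum Finset.univ]
          refine Finset.sum_congr rfl fun β _ => ?_
          rw [MeasureTheory.integral_const_mul, hAhat (m - k) α β]
          rw [mul_left_comm]
  -- grid exponentials
  have hEgrid : ∀ (n K : Fin d → ℤ),
      (∑ γ, (n γ : ℂ) * ((gridM K γ : ℝ) : ℂ) / (Y γ : ℂ))
        = ∑ γ, (K γ : ℂ) * (n γ : ℂ) / (((2 * N γ - 1 : ℕ) : ℝ) : ℂ) := by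
    intro n K
    refine Finset.sum_congr rfl fun γ _ => ?_
    rw [hgrid]
    have h1 : ((Y γ : ℝ) : ℂ) ≠ 0 := hYc0 γ
    have h2 : ((2 * N γ - 1 : ℕ) : ℂ) ≠ 0 := by
      have := hNpos γ; simp only [ne_eq, Nat.cast_eq_zero]; omega
    have h3 : ((N γ * 2 - 1 : ℕ) : ℂ) ≠ 0 := by
      have := hNpos γ; simp only [ne_eq, Nat.cast_eq_zero]; omega
    push_cast
    field_simp
  have huNg : ∀ (K : Fin d → ℤ) (β : Fin d), uN (gridM K) β = ∑ k ∈ ZdN, uc k β *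
      Complex.exp (2 * Real.pi * Complex.I *
        ∑ γ, (K γ : ℂ) * (k γ : ℂ) / (((2 * N γ - 1 : ℕ) : ℝ) : ℂ)) := by
    intro K β
    rw [huN]
    exact Finset.sum_congr rfl fun k _ => by rw [hEgrid k K]
  have hconjW : ∀ (K m : Fin d → ℤ),
      starRingEnd ℂ (Complex.exp (2 * Real.pi * Complex.I *
          ∑ γ, (K γ : ℂ) * (m γ : ℂ) / (((2 * N γ - 1 : ℕ) : ℝ) : ℂ)))
        = Complex.exp (2 * Real.pi * Complex.I *
          ∑ γ, (K γ : ℂ) * ((-m) γ : ℂ) / (((2 * N γ - 1 : ℕ) : ℝ) : ℂ)) := by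
    intro K m
    rw [← Complex.exp_conj]
    congr 1
    have h : ∀ γ : Fin d, (K γ : ℂ) * ((-m) γ : ℂ) / (((2 * N γ - 1 : ℕ) : ℝ) : ℂ)
        = -((K γ : ℂ) * ((m γ : ℤ) : ℂ) / (((2 * N γ - 1 : ℕ) : ℝ) : ℂ)) := by
      intro γ
      have h0 : (-m) γ = -(m γ) := rfl
      rw [h0]; push_cast; ring
    rw [Finset.sum_congr rfl fun γ _ => h γ, Finset.sum_neg_distrib]
    simp only [_root_.map_mul, map_sum, map_div₀, map_ofNat, Complex.conj_ofReal, Complex.conj_I,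
      map_intCast]
    ring
  have hconjvg : ∀ (K : Fin d → ℤ) (α : Fin d), starRingEnd ℂ (vN (gridM K) α)
      = ∑ m ∈ ZdN, starRingEnd ℂ (vc m α) * Complex.exp (2 * Real.pi * Complex.I *
          ∑ γ, (K γ : ℂ) * ((-m) γ : ℂ) / (((2 * N γ - 1 : ℕ) : ℝ) : ℂ)) := by
    intro K α
    rw [hvN, map_sum]
    refine Finset.sum_congr rfl fun m _ => ?_
    rw [_root_.map_mul, hEgrid m K, hconjW K m]
  have hW3 : ∀ (K n k m : Fin d → ℤ),
      Complex.exp (2 * Real.pi * Complex.I *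
          ∑ γ, (K γ : ℂ) * (n γ : ℂ) / (((2 * N γ - 1 : ℕ) : ℝ) : ℂ)) *
        Complex.exp (2 * Real.pi * Complex.I *
          ∑ γ, (K γ : ℂ) * (k γ : ℂ) / (((2 * N γ - 1 : ℕ) : ℝ) : ℂ)) *
        Complex.exp (2 * Real.pi * Complex.I *
          ∑ γ, (K γ : ℂ) * ((-m) γ : ℂ) / (((2 * N γ - 1 : ℕ) : ℝ) : ℂ))
      = Complex.exp (2 * Real.pi * Complex.I *
          ∑ γ, (K γ : ℂ) * ((n + k - m) γ : ℂ) / (((2 * N γ - 1 : ℕ) : ℝ) : ℂ)) := by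
    intro K n k m
    rw [← Complex.exp_add, ← Complex.exp_add]
    congr 1
    have h : ∀ γ : Fin d, (K γ : ℂ) * ((n + k - m) γ : ℂ) / (((2 * N γ - 1 : ℕ) : ℝ) : ℂ)
        = (K γ : ℂ) * (n γ : ℂ) / (((2 * N γ - 1 : ℕ) : ℝ) : ℂ)
          + (K γ : ℂ) * (k γ : ℂ) / (((2 * N γ - 1 : ℕ) : ℝ) : ℂ)
          + (K γ : ℂ) * ((-m) γ : ℂ) / (((2 * N γ - 1 : ℕ) : ℝ) : ℂ) := by
      intro γ
      have h0 : (n + k - m) γ = n γ + k γ - m γ := rfl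
      have h1 : (-m) γ = -(m γ) := rfl
      rw [h0, h1]; push_cast; ring
    rw [Finset.sum_congr rfl fun γ _ => h γ, Finset.sum_add_distrib, Finset.sum_add_distrib]
    ring
  have habs : ∀ (n k m : Fin d → ℤ), n ∈ Zd2N → k ∈ ZdN → m ∈ ZdN →
      ∀ α, |(n + k - m) α| < ((2 * N α - 1 : ℕ) : ℤ) := by
    intro n k m hn hk hm α
    have h1 := (hZd2N n).1 hn α
    have h2 := (hZdN k).1 hk α
    have h3 := (hZdN m).1 hm α
    have h4 : (n + k - m) α = n α + k α - m α := rfl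
    rw [h4, abs_lt]
    omega
  have hmk : ∀ k m : Fin d → ℤ, k ∈ ZdN → m ∈ ZdN → m - k ∈ Zd2N := by
    intro k m hk hm
    rw [hZd2N]
    intro α
    have h2 := (hZdN k).1 hk α
    have h3 := (hZdN m).1 hm α
    have h4 : (m - k) α = m α - k α := rfl
    rw [h4]
    omega
  have hcond : ∀ n k m : Fin d → ℤ, (n + k - m = 0) ↔ (n = m - k) := by
    intro n k m
    rw [sub_eq_zero, ← eq_sub_iff_add_eq]
  -- RHS
  have hR : (∏ α, ((2 * N α - 1 : ℕ) : ℂ))⁻¹ * ∑ K ∈ Zd2N, ∑ α, ∑ β,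
        AM K α β * uN (gridM K) β * starRingEnd ℂ (vN (gridM K) α)
      = ∑ k ∈ ZdN, ∑ m ∈ ZdN, ∑ α, ∑ β,
          (uc k β * starRingEnd ℂ (vc m α)) * Ahat (m - k) α β := by
    have hKin : ∀ K : Fin d → ℤ,
        (∑ α, ∑ β, AM K α β * uN (gridM K) β * starRingEnd ℂ (vN (gridM K) α))
        = ∑ k ∈ ZdN, ∑ m ∈ ZdN, ∑ α, ∑ β, ∑ n ∈ Zd2N,
            (Complex.exp (2 * Real.pi * Complex.I *
              ∑ γ, (K γ : ℂ) * (n γ : ℂ) / (((2 * N γ - 1 : ℕ) : ℝ) : ℂ)) * Ahat n α β) *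
            (uc k β * Complex.exp (2 * Real.pi * Complex.I *
              ∑ γ, (K γ : ℂ) * (k γ : ℂ) / (((2 * N γ - 1 : ℕ) : ℝ) : ℂ))) *
            (starRingEnd ℂ (vc m α) * Complex.exp (2 * Real.pi * Complex.I *
              ∑ γ, (K γ : ℂ) * ((-m) γ : ℂ) / (((2 * N γ - 1 : ℕ) : ℝ) : ℂ))) := by
      intro K
      calc (∑ α, ∑ β, AM K α β * uN (gridM K) β * starRingEnd ℂ (vN (gridM K) α))
          = ∑ α, ∑ β, (∑ n ∈ Zd2N, Complex.exp (2 * Real.pi * Complex.I *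
              ∑ γ, (K γ : ℂ) * (n γ : ℂ) / (((2 * N γ - 1 : ℕ) : ℝ) : ℂ)) * Ahat n α β) *
            (∑ k ∈ ZdN, uc k β * Complex.exp (2 * Real.pi * Complex.I *
              ∑ γ, (K γ : ℂ) * (k γ : ℂ) / (((2 * N γ - 1 : ℕ) : ℝ) : ℂ))) *
            (∑ m ∈ ZdN, starRingEnd ℂ (vc m α) * Complex.exp (2 * Real.pi * Complex.I *
              ∑ γ, (K γ : ℂ) * ((-m) γ : ℂ) / (((2 * N γ - 1 : ℕ) : ℝ) : ℂ))) := by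
            refine Finset.sum_congr rfl fun α _ => Finset.sum_congr rfl fun β _ => ?_
            rw [hAM K α β, huNg K β, hconjvg K α]
        _ = ∑ k ∈ ZdN, ∑ m ∈ ZdN, ∑ α, ∑ β,
            (∑ n ∈ Zd2N, Complex.exp (2 * Real.pi * Complex.I *
              ∑ γ, (K γ : ℂ) * (n γ : ℂ) / (((2 * N γ - 1 : ℕ) : ℝ) : ℂ)) * Ahat n α β) *
            (uc k β * Complex.exp (2 * Real.pi * Complex.I *
              ∑ γ, (K γ : ℂ) * (k γ : ℂ) / (((2 * N γ - 1 : ℕ) : ℝ) : ℂ))) *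
            (starRingEnd ℂ (vc m α) * Complex.exp (2 * Real.pi * Complex.I *
              ∑ γ, (K γ : ℂ) * ((-m) γ : ℂ) / (((2 * N γ - 1 : ℕ) : ℝ) : ℂ))) :=
            expand_bilin Finset.univ Finset.univ ZdN ZdN
              (fun α β => ∑ n ∈ Zd2N, Complex.exp (2 * Real.pi * Complex.I *
                ∑ γ, (K γ : ℂ) * (n γ : ℂ) / (((2 * N γ - 1 : ℕ) : ℝ) : ℂ)) * Ahat n α β)
              (fun k β => uc k β * Complex.exp (2 * Real.pi * Complex.I *
                ∑ γ, (K γ : ℂ) * (k γ : ℂ) / (((2 * N γ - 1 : ℕ) : ℝ) : ℂ)))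
              (fun m α => starRingEnd ℂ (vc m α) * Complex.exp (2 * Real.pi * Complex.I *
                ∑ γ, (K γ : ℂ) * ((-m) γ : ℂ) / (((2 * N γ - 1 : ℕ) : ℝ) : ℂ)))
        _ = ∑ k ∈ ZdN, ∑ m ∈ ZdN, ∑ α, ∑ β, ∑ n ∈ Zd2N,
            (Complex.exp (2 * Real.pi * Complex.I *
              ∑ γ, (K γ : ℂ) * (n γ : ℂ) / (((2 * N γ - 1 : ℕ) : ℝ) : ℂ)) * Ahat n α β) *
            (uc k β * Complex.exp (2 * Real.pi * Complex.I *
              ∑ γ, (K γ : ℂ) * (k γ : ℂ) / (((2 * N γ - 1 : ℕ) : ℝ) : ℂ))) *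
            (starRingEnd ℂ (vc m α) * Complex.exp (2 * Real.pi * Complex.I *
              ∑ γ, (K γ : ℂ) * ((-m) γ : ℂ) / (((2 * N γ - 1 : ℕ) : ℝ) : ℂ))) := by
            refine Finset.sum_congr rfl fun k _ => Finset.sum_congr rfl fun m _ =>
              Finset.sum_congr rfl fun α _ => Finset.sum_congr rfl fun β _ => ?_
            rw [Finset.sum_mul, Finset.sum_mul]
    calc (∏ α, ((2 * N α - 1 : ℕ) : ℂ))⁻¹ * ∑ K ∈ Zd2N, ∑ α, ∑ β,
          AM K α β * uN (gridM K) β * starRingEnd ℂ (vN (gridM K) α)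
        = (∏ α, ((2 * N α - 1 : ℕ) : ℂ))⁻¹ * ∑ K ∈ Zd2N, ∑ k ∈ ZdN, ∑ m ∈ ZdN, ∑ α, ∑ β,
            ∑ n ∈ Zd2N,
            (Complex.exp (2 * Real.pi * Complex.I *
              ∑ γ, (K γ : ℂ) * (n γ : ℂ) / (((2 * N γ - 1 : ℕ) : ℝ) : ℂ)) * Ahat n α β) *
            (uc k β * Complex.exp (2 * Real.pi * Complex.I *
              ∑ γ, (K γ : ℂ) * (k γ : ℂ) / (((2 * N γ - 1 : ℕ) : ℝ) : ℂ))) *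
            (starRingEnd ℂ (vc m α) * Complex.exp (2 * Real.pi * Complex.I *
              ∑ γ, (K γ : ℂ) * ((-m) γ : ℂ) / (((2 * N γ - 1 : ℕ) : ℝ) : ℂ))) := by
          rw [Finset.sum_congr rfl fun K _ => hKin K]
      _ = (∏ α, ((2 * N α - 1 : ℕ) : ℂ))⁻¹ * ∑ k ∈ ZdN, ∑ m ∈ ZdN, ∑ α, ∑ β, ∑ n ∈ Zd2N,
            ∑ K ∈ Zd2N,
            (Complex.exp (2 * Real.pi * Complex.I *
              ∑ γ, (K γ : ℂ) * (n γ : ℂ) / (((2 * N γ - 1 : ℕ) : ℝ) : ℂ)) * Ahat n α β) *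
            (uc k β * Complex.exp (2 * Real.pi * Complex.I *
              ∑ γ, (K γ : ℂ) * (k γ : ℂ) / (((2 * N γ - 1 : ℕ) : ℝ) : ℂ))) *
            (starRingEnd ℂ (vc m α) * Complex.exp (2 * Real.pi * Complex.I *
              ∑ γ, (K γ : ℂ) * ((-m) γ : ℂ) / (((2 * N γ - 1 : ℕ) : ℝ) : ℂ))) := by
          congr 1
          exact sum_push5 Zd2N ZdN ZdN Finset.univ Finset.univ Zd2N
            (fun K k m α β n =>
            (Complex.exp (2 * Real.pi * Complex.I *
              ∑ γ, (K γ : ℂ) * (n γ : ℂ) / (((2 * N γ - 1 : ℕ) : ℝ) : ℂ)) * Ahat n α β) *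
            (uc k β * Complex.exp (2 * Real.pi * Complex.I *
              ∑ γ, (K γ : ℂ) * (k γ : ℂ) / (((2 * N γ - 1 : ℕ) : ℝ) : ℂ))) *
            (starRingEnd ℂ (vc m α) * Complex.exp (2 * Real.pi * Complex.I *
              ∑ γ, (K γ : ℂ) * ((-m) γ : ℂ) / (((2 * N γ - 1 : ℕ) : ℝ) : ℂ))))
      _ = (∏ α, ((2 * N α - 1 : ℕ) : ℂ))⁻¹ * ∑ k ∈ ZdN, ∑ m ∈ ZdN, ∑ α, ∑ β, ∑ n ∈ Zd2N,
            (if n = m - k then (Ahat n α β * uc k β * starRingEnd ℂ (vc m α)) *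
              (∏ α, ((2 * N α - 1 : ℕ) : ℂ)) else 0) := by
          congr 1
          refine Finset.sum_congr rfl fun k hk => Finset.sum_congr rfl fun m hm =>
            Finset.sum_congr rfl fun α _ => Finset.sum_congr rfl fun β _ =>
            Finset.sum_congr rfl fun n hn => ?_
          have hstep : ∀ K : Fin d → ℤ,
              (Complex.exp (2 * Real.pi * Complex.I *
                ∑ γ, (K γ : ℂ) * (n γ : ℂ) / (((2 * N γ - 1 : ℕ) : ℝ) : ℂ)) * Ahat n α β) *
              (uc k β * Complex.exp (2 * Real.pi * Complex.I *
                ∑ γ, (K γ : ℂ) * (k γ : ℂ) / (((2 * N γ - 1 : ℕ) : ℝ) : ℂ))) *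
              (starRingEnd ℂ (vc m α) * Complex.exp (2 * Real.pi * Complex.I *
                ∑ γ, (K γ : ℂ) * ((-m) γ : ℂ) / (((2 * N γ - 1 : ℕ) : ℝ) : ℂ)))
              = (Ahat n α β * uc k β * starRingEnd ℂ (vc m α)) *
                Complex.exp (2 * Real.pi * Complex.I *
                  ∑ γ, (K γ : ℂ) * ((n + k - m) γ : ℂ) / (((2 * N γ - 1 : ℕ) : ℝ) : ℂ)) := by
            intro K
            rw [← hW3 K n k m]
            ring
          rw [Finset.sum_congr rfl fun K _ => hstep K, ← Finset.mul_sum,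
            disc_orth N hNpos Zd2N hZd2N (n + k - m) (habs n k m hn hk hm),
            if_congr (hcond n k m) rfl rfl, mul_ite, mul_zero]
      _ = (∏ α, ((2 * N α - 1 : ℕ) : ℂ))⁻¹ * ∑ k ∈ ZdN, ∑ m ∈ ZdN, ∑ α, ∑ β,
            (Ahat (m - k) α β * uc k β * starRingEnd ℂ (vc m α)) *
              (∏ α, ((2 * N α - 1 : ℕ) : ℂ)) := by
          congr 1
          refine Finset.sum_congr rfl fun k hk => Finset.sum_congr rfl fun m hm =>
            Finset.sum_congr rfl fun α _ => Finset.sum_congr rfl fun β _ => ?_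
          rw [Finset.sum_ite_eq' Zd2N (m - k)
            (fun n => (Ahat n α β * uc k β * starRingEnd ℂ (vc m α)) *
              (∏ α, ((2 * N α - 1 : ℕ) : ℂ))), if_pos (hmk k m hk hm)]
      _ = ∑ k ∈ ZdN, ∑ m ∈ ZdN, ∑ α, ∑ β,
            (uc k β * starRingEnd ℂ (vc m α)) * Ahat (m - k) α β := by
          simp only [Finset.mul_sum]
          refine Finset.sum_congr rfl fun k _ => Finset.sum_congr rfl fun m _ =>
            Finset.sum_congr rfl fun α _ => Finset.sum_congr rfl fun β _ => ?_
          rw [show (∏ α, ((2 * N α - 1 : ℕ) : ℂ))⁻¹ *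
              ((Ahat (m - k) α β * uc k β * starRingEnd ℂ (vc m α)) *
                (∏ α, ((2 * N α - 1 : ℕ) : ℂ)))
            = (Ahat (m - k) α β * uc k β * starRingEnd ℂ (vc m α)) *
              ((∏ α, ((2 * N α - 1 : ℕ) : ℂ)) * (∏ α, ((2 * N α - 1 : ℕ) : ℂ))⁻¹) from by ring,
            mul_inv_cancel₀ hPM0, mul_one]
          ring
  exact hL.trans hR.symm
end
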